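/- arXiv:2201.04062 — 4 statements merged into one kernel-verified Lean document; each statement's English description precedes it below -/
import Mathlib

section
/- For every integer β≥2, if a graph H is weakly β-buildable, then H is an induced subgraph of some β-buildable graph. -/
noncomputable section

namespace PurePairs

open SimpleGraph

variable {V W : Type*}

/-- A pure pair in `G`: a pair of disjoint vertex sets that are complete
or anticomplete to each other. -/
def PurePair (G : SimpleGraph V) (A B : Set V) : Prop :=
  Disjoint A B ∧
    ((∀ a ∈ A, ∀ b ∈ B, G.Adj a b) ∨ (∀ a ∈ A, ∀ b ∈ B, ¬ G.Adj a b))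

/-- `G` contains `H`: some induced subgraph of `G` is isomorphic to `H`. -/
def Contains (G : SimpleGraph V) (H : SimpleGraph W) : Prop :=
  Nonempty (H ↪g G)

/-- The congestion of a graph `H`: the maximum (here: supremum, together with `0`)
of `1 - (|J|-1)/|E(J)|` over all subgraphs `J` of `H` with at least one edge.
If `H` has no edges this is `0`. -/
def congestion (H : SimpleGraph V) : ℝ :=
  sSup ({0} ∪ {x : ℝ | ∃ J : H.Subgraph, J.edgeSet.Nonempty ∧
    x = 1 - ((J.verts.ncard : ℝ) - 1) / (J.edgeSet.ncard : ℝ)})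

/-- `A` is anticomplete to `B`: no edges between them. -/
def Anticomplete (G : SimpleGraph V) (A B : Set V) : Prop :=
  ∀ a ∈ A, ∀ b ∈ B, ¬ G.Adj a b

/-- `A` covers `B`: every vertex of `B` has a neighbour in `A`. -/
def Covers (G : SimpleGraph V) (A B : Set V) : Prop :=
  ∀ b ∈ B, ∃ a ∈ A, G.Adj a b

/-- `G` is `ε`-sparse: every vertex has degree less than `ε|G|`. -/
def EpsSparse (G : SimpleGraph V) [Fintype V] (ε : ℝ) : Prop :=
  ∀ v : V, ((G.neighborSet v).ncard : ℝ) < ε * (Fintype.card V : ℝ)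

/-- `G` is `(γ,δ)`-coherent: there is no pair of disjoint anticomplete sets `A`, `B`
with `|A| ≥ γ` and `|B| ≥ δ`. -/
def Coherent (G : SimpleGraph V) (γ δ : ℝ) : Prop :=
  ¬ ∃ A B : Set V, Disjoint A B ∧ Anticomplete G A B ∧
      γ ≤ (A.ncard : ℝ) ∧ δ ≤ (B.ncard : ℝ)

/-- `N(X)`: the set of vertices with a neighbour in `X`. -/
def nbhd (G : SimpleGraph V) (X : Set V) : Set V :=
  {v | ∃ x ∈ X, G.Adj x v}

/-- A blockade: a family of nonempty pairwise disjoint vertex sets indexed by a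
finite set of integers. -/
def IsBlockade (I : Finset ℤ) (A : ℤ → Set V) : Prop :=
  (∀ i ∈ I, (A i).Nonempty) ∧
    ∀ i ∈ I, ∀ j ∈ I, i ≠ j → Disjoint (A i) (A j)

/-- The blockade `(A i : i ∈ I)` is `(γ,δ)`-divergent. -/
def Divergent (G : SimpleGraph V) (I : Finset ℤ) (A : ℤ → Set V) (γ δ : ℝ) : Prop :=
  ∃ i ∈ I, ∃ j ∈ I, i ≠ j ∧ ∃ X ⊆ A i, ∃ Y ⊆ A j,
    γ * ((A i).ncard : ℝ) ≤ (X.ncard : ℝ) ∧ δ * ((A j).ncard : ℝ) ≤ (Y.ncard : ℝ) ∧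
    Anticomplete G X Y

/-- The blockade `(A i : i ∈ I)` is `τ`-expanding. -/
def Expanding (G : SimpleGraph V) (I : Finset ℤ) (A : ℤ → Set V) (τ : ℝ) : Prop :=
  ∀ i ∈ I, ∀ j ∈ I, i ≠ j → ∀ X ⊆ A i,
    min (τ * (X.ncard : ℝ) / ((A i).ncard : ℝ)) (1/4)
      ≤ (((nbhd G X) ∩ A j).ncard : ℝ) / ((A j).ncard : ℝ)

/-- The linkage of the blockade `(A i : i ∈ I)` is at most `lam`. -/
def LinkageLE (G : SimpleGraph V) (I : Finset ℤ) (A : ℤ → Set V) (lam : ℝ) : Prop :=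
  ∀ i ∈ I, ∀ j ∈ I, i ≠ j → ∀ v ∈ A i,
    ((G.neighborSet v ∩ A j).ncard : ℝ) ≤ lam * ((A j).ncard : ℝ)

/-- The shrinkage of the blockade `(A i : i ∈ I)` is at most `σ`, i.e. its width is at
least `|G|^{1-σ}`. -/
def ShrinkageLE [Fintype V] (I : Finset ℤ) (A : ℤ → Set V) (σ : ℝ) : Prop :=
  ∀ i ∈ I, (Fintype.card V : ℝ) ^ (1 - σ) ≤ ((A i).ncard : ℝ)

/-- `(L 0, …, L k)` is a levelling in `G`. -/
def IsLevelling (G : SimpleGraph V) (L : ℕ → Set V) (k : ℕ) : Prop :=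
  1 ≤ k ∧ (L 0).ncard = 1 ∧
  (∀ i ≤ k, ∀ j ≤ k, i ≠ j → Disjoint (L i) (L j)) ∧
  (∀ i, 1 ≤ i → i ≤ k → Covers G (L (i-1)) (L i)) ∧
  (∀ i, 2 ≤ i → i ≤ k → ∀ h, h + 2 ≤ i → Anticomplete G (L h) (L i))

/-- The levelling `(L 0, …, L k)` reaches `C`, i.e. `(L 0, …, L k, C)` is a levelling. -/
def Reaches (G : SimpleGraph V) (L : ℕ → Set V) (k : ℕ) (C : Set V) : Prop :=
  IsLevelling G (fun i => if i = k + 1 then C else L i) (k + 1)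

/-- The levelling `(L 0, …, L k)` is `(B i : i ∈ I)`-rainbow. -/
def RainbowLevelling (I : Finset ℤ) (B : ℤ → Set V) (L : ℕ → Set V) (k : ℕ) : Prop :=
  ∃ q : ℕ → ℤ, (∀ i ≤ k, q i ∈ I ∧ L i ⊆ B (q i)) ∧
    ∀ i ≤ k, ∀ j ≤ k, q i = q j → i = j

/-- The levelling `(L 0, …, L k)` grades the blockade `(C j : j ∈ J)` (in some order). -/
def Grades (G : SimpleGraph V) (L : ℕ → Set V) (k : ℕ) (J : Finset ℤ) (C : ℤ → Set V) :
    Prop :=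
  Reaches G L k (⋃ j ∈ J, C j) ∧
  ∃ e : ℕ → ℤ, (∀ g < J.card, e g ∈ J) ∧
    (∀ g < J.card, ∀ h < J.card, e g = e h → g = h) ∧
    ∀ g < J.card, ∃ Y ⊆ L k,
      (∀ h, g ≤ h → h < J.card → Covers G Y (C (e h))) ∧
      (∀ h, h < g → Anticomplete G Y (C (e h)))

/-- The levelling `(L 0, …, L k)` grades the blockade `(C j : j ∈ J)` forwards. -/
def GradesFwd (G : SimpleGraph V) (L : ℕ → Set V) (k : ℕ) (J : Finset ℤ) (C : ℤ → Set V) :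
    Prop :=
  Reaches G L k (⋃ j ∈ J, C j) ∧
  ∀ j ∈ J, ∃ Y ⊆ L k,
    (∀ i ∈ J, j ≤ i → Covers G Y (C i)) ∧
    (∀ i ∈ J, i < j → Anticomplete G Y (C i))

/-- The levelling `(L 0, …, L k)` grades the blockade `(C j : j ∈ J)` backwards. -/
def GradesBwd (G : SimpleGraph V) (L : ℕ → Set V) (k : ℕ) (J : Finset ℤ) (C : ℤ → Set V) :
    Prop :=
  Reaches G L k (⋃ j ∈ J, C j) ∧
  ∀ j ∈ J, ∃ Y ⊆ L k,
    (∀ i ∈ J, i ≤ j → Covers G Y (C i)) ∧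
    (∀ i ∈ J, j < i → Anticomplete G Y (C i))

/-- Two levellings are parallel. -/
def Parallel (G : SimpleGraph V) (L : ℕ → Set V) (k : ℕ) (M : ℕ → Set V) (m : ℕ) : Prop :=
  L 0 = M 0 ∧
  Disjoint (⋃ j ∈ Finset.Icc 1 m, M j) (⋃ i ∈ Finset.Icc 1 k, L i) ∧
  Anticomplete G (⋃ j ∈ Finset.Icc 1 m, M j) (⋃ i ∈ Finset.Icc 1 k, L i)

/-- `(L, M, C)` is a bi-levelling, where `L` has height `k` and `M` has height `m`:
`C` is a blockade, `L, M` are parallel levellings both reaching the union of the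
blocks of `C`, and `L` grades `C` forwards. Its height is `k + m` and its length is
the length of `C`. -/
def IsBiLevelling (G : SimpleGraph V) (L : ℕ → Set V) (k : ℕ) (M : ℕ → Set V) (m : ℕ)
    (J : Finset ℤ) (C : ℤ → Set V) : Prop :=
  IsBlockade J C ∧ IsLevelling G L k ∧ IsLevelling G M m ∧ Parallel G L k M m ∧
    Reaches G M m (⋃ j ∈ J, C j) ∧ GradesFwd G L k J C

/-- A bi-grading: a bi-levelling in which `M` also grades `C` backwards. -/
def IsBiGrading (G : SimpleGraph V) (L : ℕ → Set V) (k : ℕ) (M : ℕ → Set V) (m : ℕ)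
    (J : Finset ℤ) (C : ℤ → Set V) : Prop :=
  IsBiLevelling G L k M m J C ∧ GradesBwd G M m J C

/-- The bi-levelling `(L, M, C)` is `(A i : i ∈ I)`-rainbow: each block of `C`, each
level of `L`, and each level of `M` other than `M 0 = L 0` is included in a block of
`A`, and distinct such sets lie in distinct blocks. -/
def RainbowBiLevelling (I : Finset ℤ) (A : ℤ → Set V)
    (L : ℕ → Set V) (k : ℕ) (M : ℕ → Set V) (m : ℕ)
    (J : Finset ℤ) (C : ℤ → Set V) : Prop :=
  ∃ (qc : ℤ → ℤ) (ql qm : ℕ → ℤ),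
    (∀ j ∈ J, qc j ∈ I ∧ C j ⊆ A (qc j)) ∧
    (∀ i ≤ k, ql i ∈ I ∧ L i ⊆ A (ql i)) ∧
    (∀ i, 1 ≤ i → i ≤ m → qm i ∈ I ∧ M i ⊆ A (qm i)) ∧
    (∀ j ∈ J, ∀ j' ∈ J, qc j = qc j' → j = j') ∧
    (∀ i ≤ k, ∀ i' ≤ k, ql i = ql i' → i = i') ∧
    (∀ i, 1 ≤ i → i ≤ m → ∀ i', 1 ≤ i' → i' ≤ m → qm i = qm i' → i = i') ∧
    (∀ j ∈ J, ∀ i ≤ k, qc j ≠ ql i) ∧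
    (∀ j ∈ J, ∀ i, 1 ≤ i → i ≤ m → qc j ≠ qm i) ∧
    (∀ i ≤ k, ∀ i', 1 ≤ i' → i' ≤ m → ql i ≠ qm i')

/-- Each block of `(C j : j ∈ J)` lies in a block of `(A i : i ∈ I)`; the `A`-size of
`C` is at least `η` when every block of `C` has size at least `η` times the size of the
block of `A` containing it. -/
def SizeGE (I : Finset ℤ) (A : ℤ → Set V) (J : Finset ℤ) (C : ℤ → Set V) (η : ℝ) : Prop :=
  ∀ j ∈ J, ∀ i ∈ I, C j ⊆ A i → η * ((A i).ncard : ℝ) ≤ ((C j).ncard : ℝ)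

/-- A `(B i : i ∈ I)`-rainbow induced path `p 0 - p 1 - ⋯ - p n` in `G`. -/
def RainbowPath (G : SimpleGraph V) (I : Finset ℤ) (B : ℤ → Set V)
    (n : ℕ) (p : ℕ → V) : Prop :=
  (∀ i ≤ n, ∀ j ≤ n, p i = p j → i = j) ∧
  (∀ i < n, G.Adj (p i) (p (i+1))) ∧
  (∀ i j, i + 1 < j → j ≤ n → ¬ G.Adj (p i) (p j)) ∧
  ∃ q : ℕ → ℤ, (∀ i ≤ n, q i ∈ I ∧ p i ∈ B (q i)) ∧
    ∀ i ≤ n, ∀ j ≤ n, q i = q j → i = j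

/-- A `(B i : i ∈ I)`-rainbow copy of `H` in `G`: an induced copy of `H` with each
vertex in a different block. -/
def RainbowCopy (G : SimpleGraph V) (I : Finset ℤ) (B : ℤ → Set V)
    (H : SimpleGraph W) : Prop :=
  ∃ (f : H ↪g G) (q : W → ℤ), Function.Injective q ∧ ∀ w : W, q w ∈ I ∧ f w ∈ B (q w)

/-- `(N,K,σ,lam,c)` forces `H`. -/
def Forces (H : SimpleGraph W) (N K : ℕ) (σ lam c : ℝ) : Prop :=
  ∀ {V : Type} [Fintype V] (G : SimpleGraph V),
    Coherent G ((Fintype.card V : ℝ) ^ (1 - c)) ((Fintype.card V : ℝ) ^ (1 - c)) →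
    N ≤ Fintype.card V →
    ∀ (I : Finset ℤ) (A : ℤ → Set V), IsBlockade I A → I.card = K →
      ShrinkageLE I A σ → LinkageLE G I A lam →
      RainbowCopy G I A H

/-- `p 0 - ⋯ - p n` is a handle of length `n` that can be added to (the graph induced
on) `S` inside the ambient graph `H`: an induced path of `H[S ∪ p]` of length at least
two whose ends lie in `S`, whose internal vertices avoid `S` and have degree two in
`H[S ∪ p]`. -/
def IsHandle (H : SimpleGraph V) (S : Set V) (n : ℕ) (p : ℕ → V) : Prop :=
  2 ≤ n ∧
  (∀ i ≤ n, ∀ j ≤ n, p i = p j → i = j) ∧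
  p 0 ∈ S ∧ p n ∈ S ∧
  (∀ i, 0 < i → i < n → p i ∉ S) ∧
  (∀ i < n, H.Adj (p i) (p (i+1))) ∧
  (∀ i j, i + 1 < j → j ≤ n → ¬ H.Adj (p i) (p j)) ∧
  (∀ i, 0 < i → i < n → ∀ w, (w ∈ S ∨ ∃ j ≤ n, w = p j) → H.Adj (p i) w →
    w = p (i-1) ∨ w = p (i+1))

/-- The vertex sets `S` such that the induced subgraph `H[S]` can be built, starting
from the two-vertex graph with no edges, by repeatedly adding handles of length at
least `β`. -/
inductive BuildableOn (H : SimpleGraph V) (β : ℕ) : Set V → Prop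
  | base (u v : V) (huv : u ≠ v) (hadj : ¬ H.Adj u v) : BuildableOn H β {u, v}
  | handle (S : Set V) (n : ℕ) (p : ℕ → V) (hS : BuildableOn H β S)
      (hh : IsHandle H S n p) (hn : β ≤ n) :
      BuildableOn H β (S ∪ {w | ∃ j ≤ n, w = p j})

/-- `H` is `β`-buildable. -/
def Buildable [Fintype V] (H : SimpleGraph V) (β : ℕ) : Prop :=
  BuildableOn H β Set.univ

/-- The vertex sets `S` such that the induced subgraph `H[S]` can be built, starting
from the null graph, by repeatedly adding a subleaf or a handle of length at least
`β`. -/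
inductive WeaklyBuildableOn (H : SimpleGraph V) (β : ℕ) : Set V → Prop
  | empty : WeaklyBuildableOn H β ∅
  | subleaf (S : Set V) (v : V) (hv : v ∉ S) (hdeg : (S ∩ H.neighborSet v).ncard ≤ 1)
      (hS : WeaklyBuildableOn H β S) : WeaklyBuildableOn H β (insert v S)
  | handle (S : Set V) (n : ℕ) (p : ℕ → V) (hS : WeaklyBuildableOn H β S)
      (hh : IsHandle H S n p) (hn : β ≤ n) :
      WeaklyBuildableOn H β (S ∪ {w | ∃ j ≤ n, w = p j})

/-- `H` is weakly `β`-buildable. -/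
def WeaklyBuildable [Fintype V] (H : SimpleGraph V) (β : ℕ) : Prop :=
  WeaklyBuildableOn H β Set.univ


section Statement5Aux

variable {V : Type} (H : SimpleGraph V) (β : ℕ)

/-- Vertex type for the ambient buildable graph: original vertices, a chain of `β`
extra vertices per original vertex, and two base vertices. -/
abbrev Wt (V : Type) (β : ℕ) : Type := V ⊕ (V × Fin β) ⊕ Fin 2

/-- Base relation for the ambient graph, parametrised by the sets `U0` (vertices
attached as degree-0 subleaves) and `U1` (all other vertices, attached as degree-1
subleaves or by leftover handles). -/
def specRel (U0 U1 : Set V) : Wt V β → Wt V β → Prop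
  | .inl u, .inl v => H.Adj u v
  | .inl v, .inr (.inl (w, j)) =>
      v = w ∧ ((w ∈ U1 ∧ (j : ℕ) = 0) ∨ (w ∈ U0 ∧ (j : ℕ) + 1 = β))
  | .inl v, .inr (.inr k) => v ∈ U0 ∧ k = 1
  | .inr (.inl (v, i)), .inr (.inl (w, j)) => v = w ∧ (i : ℕ) + 1 = (j : ℕ)
  | .inr (.inl (v, j)), .inr (.inr k) =>
      k = 0 ∧ ((v ∈ U1 ∧ (j : ℕ) + 1 = β) ∨ (v ∈ U0 ∧ (j : ℕ) = 0))
  | _, _ => False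

/-- The ambient graph. -/
def spec (U0 U1 : Set V) : SimpleGraph (Wt V β) :=
  SimpleGraph.fromRel (specRel H β U0 U1)

/-- The vertex set of the partial ambient construction. -/
def bset (S U : Set V) : Set (Wt V β) :=
  {x | match x with
    | .inl v => v ∈ S
    | .inr (.inl (v, _)) => v ∈ U
    | .inr (.inr _) => True}

@[simp] lemma mem_bset_inl {S U : Set V} {v : V} :
    (Sum.inl v : Wt V β) ∈ bset β S U ↔ v ∈ S := Iff.rfl

@[simp] lemma mem_bset_ext {S U : Set V} {v : V} {j : Fin β} :
    (Sum.inr (Sum.inl (v, j)) : Wt V β) ∈ bset β S U ↔ v ∈ U := Iff.rfl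

@[simp] lemma mem_bset_base {S U : Set V} {k : Fin 2} :
    (Sum.inr (Sum.inr k) : Wt V β) ∈ bset β S U := trivial

lemma isHandle_congr {W : Type} {G G' : SimpleGraph W} {S : Set W} {n : ℕ} {p : ℕ → W}
    (hh : IsHandle G S n p)
    (hag : ∀ x ∈ S ∪ {w | ∃ j ≤ n, w = p j}, ∀ y ∈ S ∪ {w | ∃ j ≤ n, w = p j},
      (G.Adj x y ↔ G'.Adj x y)) : IsHandle G' S n p := by
  obtain ⟨h1, h2, h3, h4, h5, h6, h7, h8⟩ := hh
  have hp : ∀ i ≤ n, p i ∈ S ∪ {w | ∃ j ≤ n, w = p j} := fun i hi => Or.inr ⟨i, hi, rfl⟩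
  refine ⟨h1, h2, h3, h4, h5, ?_, ?_, ?_⟩
  · intro i hi
    exact (hag _ (hp i (by omega)) _ (hp (i+1) hi)).mp (h6 i hi)
  · intro i j hij hj hadj
    exact h7 i j hij hj ((hag _ (hp i (by omega)) _ (hp j hj)).mpr hadj)
  · intro i h0 hi w hw hadj
    refine h8 i h0 hi w hw ((hag _ (hp i (by omega)) w ?_).mpr hadj)
    rcases hw with hw | hw
    · exact Or.inl hw
    · exact Or.inr hw

lemma buildableOn_congr {W : Type} {G G' : SimpleGraph W} {β : ℕ} {S : Set W}
    (h : BuildableOn G β S)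
    (hag : ∀ x ∈ S, ∀ y ∈ S, (G.Adj x y ↔ G'.Adj x y)) : BuildableOn G' β S := by
  induction h with
  | base u v huv hadj =>
      exact .base u v huv fun h' =>
        hadj ((hag u (by simp) v (by simp)).mpr h')
  | handle S n p hS hh hn ih =>
      refine .handle S n p (ih ?_) (isHandle_congr hh hag) hn
      · intro x hx y hy
        exact hag x (Or.inl hx) y (Or.inl hy)


lemma spec_adj_inl_inl {U0 U1 : Set V} {u v : V} :
    (spec H β U0 U1).Adj (Sum.inl u) (Sum.inl v) ↔ H.Adj u v := by
  simp only [spec, SimpleGraph.fromRel_adj, specRel]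
  constructor
  · rintro ⟨-, h | h⟩
    · exact h
    · exact h.symm
  · intro h
    exact ⟨by simp [h.ne], Or.inl h⟩

lemma spec_adj_inl_ext {U0 U1 : Set V} {v w : V} {j : Fin β} :
    (spec H β U0 U1).Adj (Sum.inl v) (Sum.inr (Sum.inl (w, j))) ↔
      v = w ∧ ((w ∈ U1 ∧ (j : ℕ) = 0) ∨ (w ∈ U0 ∧ (j : ℕ) + 1 = β)) := by
  simp only [spec, SimpleGraph.fromRel_adj, specRel]
  constructor
  · rintro ⟨-, h | h⟩
    · exact h
    · exact h.elim
  · intro h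
    exact ⟨by simp, Or.inl h⟩

lemma spec_adj_ext_inl {U0 U1 : Set V} {v w : V} {j : Fin β} :
    (spec H β U0 U1).Adj (Sum.inr (Sum.inl (w, j))) (Sum.inl v) ↔
      v = w ∧ ((w ∈ U1 ∧ (j : ℕ) = 0) ∨ (w ∈ U0 ∧ (j : ℕ) + 1 = β)) := by
  rw [SimpleGraph.adj_comm]
  exact spec_adj_inl_ext H β

lemma spec_adj_inl_base {U0 U1 : Set V} {v : V} {k : Fin 2} :
    (spec H β U0 U1).Adj (Sum.inl v) (Sum.inr (Sum.inr k)) ↔ v ∈ U0 ∧ k = 1 := by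
  simp only [spec, SimpleGraph.fromRel_adj, specRel]
  constructor
  · rintro ⟨-, h | h⟩
    · exact h
    · exact h.elim
  · intro h
    exact ⟨by simp, Or.inl h⟩

lemma spec_adj_base_inl {U0 U1 : Set V} {v : V} {k : Fin 2} :
    (spec H β U0 U1).Adj (Sum.inr (Sum.inr k)) (Sum.inl v) ↔ v ∈ U0 ∧ k = 1 := by
  rw [SimpleGraph.adj_comm]
  exact spec_adj_inl_base H β

lemma spec_adj_ext_ext {U0 U1 : Set V} {v w : V} {i j : Fin β} :
    (spec H β U0 U1).Adj (Sum.inr (Sum.inl (v, i))) (Sum.inr (Sum.inl (w, j))) ↔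
      v = w ∧ ((i : ℕ) + 1 = (j : ℕ) ∨ (j : ℕ) + 1 = (i : ℕ)) := by
  simp only [spec, SimpleGraph.fromRel_adj, specRel]
  constructor
  · rintro ⟨-, h | h⟩
    · exact ⟨h.1, Or.inl h.2⟩
    · exact ⟨h.1.symm, Or.inr h.2⟩
  · rintro ⟨rfl, h | h⟩
    · refine ⟨?_, Or.inl ⟨rfl, h⟩⟩
      simp only [ne_eq, Sum.inr.injEq, Sum.inl.injEq, Prod.mk.injEq, true_and]
      intro hij
      rw [hij] at h
      omega
    · refine ⟨?_, Or.inr ⟨rfl, h⟩⟩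
      simp only [ne_eq, Sum.inr.injEq, Sum.inl.injEq, Prod.mk.injEq, true_and]
      intro hij
      rw [hij] at h
      omega

lemma spec_adj_ext_base {U0 U1 : Set V} {v : V} {j : Fin β} {k : Fin 2} :
    (spec H β U0 U1).Adj (Sum.inr (Sum.inl (v, j))) (Sum.inr (Sum.inr k)) ↔
      k = 0 ∧ ((v ∈ U1 ∧ (j : ℕ) + 1 = β) ∨ (v ∈ U0 ∧ (j : ℕ) = 0)) := by
  simp only [spec, SimpleGraph.fromRel_adj, specRel]
  constructor
  · rintro ⟨-, h | h⟩
    · exact h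
    · exact h.elim
  · intro h
    exact ⟨by simp, Or.inl h⟩

lemma spec_adj_base_ext {U0 U1 : Set V} {v : V} {j : Fin β} {k : Fin 2} :
    (spec H β U0 U1).Adj (Sum.inr (Sum.inr k)) (Sum.inr (Sum.inl (v, j))) ↔
      k = 0 ∧ ((v ∈ U1 ∧ (j : ℕ) + 1 = β) ∨ (v ∈ U0 ∧ (j : ℕ) = 0)) := by
  rw [SimpleGraph.adj_comm]
  exact spec_adj_ext_base H β

lemma spec_adj_base_base {U0 U1 : Set V} {k k' : Fin 2} :
    (spec H β U0 U1).Adj (Sum.inr (Sum.inr k)) (Sum.inr (Sum.inr k')) ↔ False := by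
  simp only [spec, SimpleGraph.fromRel_adj, specRel]
  tauto

lemma step_handle (U0 U1 S : Set V) (hU0 : U0 ⊆ S) (hU1 : U1 ⊆ S)
    {n : ℕ} {p : ℕ → V} (hh : IsHandle H S n p) :
    IsHandle (spec H β U0 U1) (bset β S (U0 ∪ U1)) n (Sum.inl ∘ p) := by
  obtain ⟨h1, h2, h3, h4, h5, h6, h7, h8⟩ := hh
  refine ⟨h1, ?_, h3, h4, ?_, ?_, ?_, ?_⟩
  · intro i hi j hj hij
    exact h2 i hi j hj (Sum.inl_injective hij)
  · intro i h0 hi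
    exact h5 i h0 hi
  · intro i hi
    exact (spec_adj_inl_inl H β).mpr (h6 i hi)
  · intro i j hij hj hadj
    exact h7 i j hij hj ((spec_adj_inl_inl H β).mp hadj)
  · rintro i h0 hi w hw hadj
    have hpi : p i ∉ S := h5 i h0 hi
    match w with
    | .inl x =>
        have hx : x ∈ S ∨ ∃ j ≤ n, x = p j := by
          rcases hw with hw | ⟨j, hj, hw⟩
          · exact Or.inl hw
          · exact Or.inr ⟨j, hj, Sum.inl_injective hw⟩
        rcases h8 i h0 hi x hx ((spec_adj_inl_inl H β).mp hadj) with h | h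
        · exact Or.inl (by simp [Function.comp, h])
        · exact Or.inr (by simp [Function.comp, h])
    | .inr (.inl (x, j)) =>
        exfalso
        simp only [spec, SimpleGraph.fromRel_adj, specRel] at hadj
        rcases hadj.2 with ⟨rfl, hc⟩ | hc
        · rcases hc with hc | hc
          · exact hpi (hU1 hc.1)
          · exact hpi (hU0 hc.1)
        · exact hc
    | .inr (.inr k) =>
        exfalso
        simp only [spec, SimpleGraph.fromRel_adj, specRel] at hadj
        rcases hadj.2 with hc | hc
        · exact hpi (hU0 hc.1)
        · exact hc

/-- Path attaching a degree-one subleaf `v` with neighbour `u`: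
`u, v, (v,0), …, (v,β-1), a`. -/
def pU1 (u v : V) : ℕ → Wt V β := fun j =>
  if h : 2 ≤ j ∧ j ≤ β + 1 then Sum.inr (Sum.inl (v, ⟨j - 2, by omega⟩))
  else if j = 0 then Sum.inl u
  else if j = 1 then Sum.inl v
  else Sum.inr (Sum.inr 0)

lemma isHandle_U1 (hβ : 2 ≤ β) {S U0 U1 : Set V} (hU0 : U0 ⊆ S) (hU1 : U1 ⊆ S)
    {v u : V} (hv : v ∉ S) (hu : S ∩ H.neighborSet v = {u}) :
    IsHandle (spec H β U0 (insert v U1)) (bset β S (U0 ∪ U1)) (β + 2) (pU1 β u v) := by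
  have humem : u ∈ S ∩ H.neighborSet v := hu ▸ Set.mem_singleton u
  have huS : u ∈ S := humem.1
  have huv : H.Adj v u := humem.2
  have hune : u ≠ v := huv.ne'
  have huniq : ∀ x ∈ S, H.Adj v x → x = u := by
    intro x hx hadj
    have : x ∈ S ∩ H.neighborSet v := ⟨hx, hadj⟩
    rw [hu] at this
    exact this
  have hv0 : v ∉ U0 := fun h => hv (hU0 h)
  have hv1 : v ∉ U1 := fun h => hv (hU1 h)
  have huv0 : v ∉ U0 ∪ U1 := by simp [hv0, hv1]
  refine ⟨by omega, ?_, ?_, ?_, ?_, ?_, ?_, ?_⟩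
  · -- injectivity
    intro i hi j hj hij
    simp only [pU1] at hij
    split_ifs at hij <;> (try simp_all) <;> omega
  · -- p 0 ∈ S'
    have e0 : pU1 β u v 0 = Sum.inl u := by simp [pU1]
    rw [e0]
    exact huS
  · -- p n ∈ S'
    have el : pU1 β u v (β+2) = Sum.inr (Sum.inr 0) := by
      simp only [pU1]
      rw [dif_neg (by omega), if_neg (by omega), if_neg (by omega)]
    rw [el]
    exact mem_bset_base β
  · -- internals not in S'
    intro i h0 hi
    simp only [pU1]
    split_ifs <;> (try simp_all) <;> omega
  · -- consecutive adjacency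
    intro i hi
    simp only [pU1]
    split_ifs <;>
      simp_all [spec_adj_inl_inl, spec_adj_inl_ext, spec_adj_ext_inl, spec_adj_ext_ext,
        spec_adj_ext_base, spec_adj_base_ext, spec_adj_inl_base, spec_adj_base_inl,
        spec_adj_base_base] <;>
      first
        | omega
        | exact huv.symm
  · -- no chords
    intro i j hij hj hadj
    simp only [pU1] at hadj
    split_ifs at hadj <;>
      simp_all [spec_adj_inl_inl, spec_adj_inl_ext, spec_adj_ext_inl, spec_adj_ext_ext,
        spec_adj_ext_base, spec_adj_base_ext, spec_adj_inl_base, spec_adj_base_inl,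
        spec_adj_base_base] <;>
      omega
  · -- internal degree condition
    intro i h0 hi w hw hadj
    by_cases hi1 : i = 1
    · subst hi1
      have e1 : pU1 β u v 1 = Sum.inl v := by simp [pU1]
      rw [e1] at hadj
      obtain x | ⟨x, j⟩ | k := w
      · rw [spec_adj_inl_inl] at hadj
        have hxu : x = u := by
          rcases hw with hw | ⟨j, hj, hw⟩
          · exact huniq x hw hadj
          · simp only [pU1] at hw
            split_ifs at hw
            all_goals
              first
                | exact Sum.inl_injective hw
                | (exfalso
                   rw [Sum.inl_injective hw] at hadj
                   exact H.irrefl hadj)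
                | simp at hw
        left
        rw [hxu]
        simp [pU1]
      · rw [spec_adj_inl_ext] at hadj
        obtain ⟨rfl, h⟩ := hadj
        rcases h with ⟨-, hj⟩ | ⟨hmem, -⟩
        · right
          simp only [pU1]
          rw [dif_pos ⟨by omega, by omega⟩]
          simp [Fin.ext_iff, hj]
        · exact absurd hmem hv0
      · rw [spec_adj_inl_base] at hadj
        exact absurd hadj.1 hv0
    · have hmid : 2 ≤ i ∧ i ≤ β + 1 := by omega
      have em : pU1 β u v i = Sum.inr (Sum.inl (v, ⟨i - 2, by omega⟩)) := by
        simp only [pU1]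
        rw [dif_pos hmid]
      rw [em] at hadj
      obtain x | ⟨x, j⟩ | k := w
      · rw [spec_adj_ext_inl] at hadj
        obtain ⟨rfl, h⟩ := hadj
        rcases h with ⟨-, h0'⟩ | ⟨hmem, -⟩
        · left
          have hi2 : i = 2 := by simp at h0'; omega
          subst hi2
          simp [pU1]
        · exact absurd hmem hv0
      · rw [spec_adj_ext_ext] at hadj
        obtain ⟨rfl, h⟩ := hadj
        have hj' : i - 2 + 1 = (j : ℕ) ∨ (j : ℕ) + 1 = i - 2 := by simpa using h
        have hjlt : (j : ℕ) < β := j.isLt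
        rcases hj' with h' | h'
        · right
          simp only [pU1]
          rw [dif_pos ⟨by omega, by omega⟩]
          simp only [Sum.inr.injEq, Sum.inl.injEq, Prod.mk.injEq, true_and]
          rw [Fin.ext_iff]
          simp only [Fin.val_mk]
          omega
        · left
          simp only [pU1]
          rw [dif_pos ⟨by omega, by omega⟩]
          simp only [Sum.inr.injEq, Sum.inl.injEq, Prod.mk.injEq, true_and]
          rw [Fin.ext_iff]
          simp only [Fin.val_mk]
          omega
      · rw [spec_adj_ext_base] at hadj
        obtain ⟨rfl, h⟩ := hadj
        rcases h with ⟨-, hβ'⟩ | ⟨hmem, -⟩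
        · right
          have hib : i = β + 1 := by simp at hβ'; omega
          subst hib
          simp only [pU1]
          rw [dif_neg (by omega), if_neg (by omega), if_neg (by omega)]
        · exact absurd hmem hv0

/-- Path attaching a degree-zero subleaf `v`: `a, (v,0), …, (v,β-1), v, b`. -/
def pU0 (v : V) : ℕ → Wt V β := fun j =>
  if h : 1 ≤ j ∧ j ≤ β then Sum.inr (Sum.inl (v, ⟨j - 1, by omega⟩))
  else if j = 0 then Sum.inr (Sum.inr 0)
  else if j = β + 1 then Sum.inl v
  else Sum.inr (Sum.inr 1)

lemma isHandle_U0 (hβ : 2 ≤ β) {S U0 U1 : Set V} (hU0 : U0 ⊆ S) (hU1 : U1 ⊆ S)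
    {v : V} (hv : v ∉ S) (hnb : S ∩ H.neighborSet v = ∅) :
    IsHandle (spec H β (insert v U0) U1) (bset β S (U0 ∪ U1)) (β + 2) (pU0 β v) := by
  have hv0 : v ∉ U0 := fun h => hv (hU0 h)
  have hv1 : v ∉ U1 := fun h => hv (hU1 h)
  have huv0 : v ∉ U0 ∪ U1 := by simp [hv0, hv1]
  have hnoadj : ∀ x ∈ S, ¬ H.Adj v x := by
    intro x hx hadj
    have : x ∈ S ∩ H.neighborSet v := ⟨hx, hadj⟩
    rw [hnb] at this
    exact this
  refine ⟨by omega, ?_, ?_, ?_, ?_, ?_, ?_, ?_⟩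
  · -- injectivity
    intro i hi j hj hij
    simp only [pU0] at hij
    split_ifs at hij <;> (try simp_all) <;> omega
  · -- p 0 ∈ S'
    have e0 : pU0 β v 0 = Sum.inr (Sum.inr 0) := by simp [pU0]
    rw [e0]
    exact mem_bset_base β
  · -- p n ∈ S'
    have el : pU0 β v (β+2) = Sum.inr (Sum.inr 1) := by
      simp only [pU0]
      rw [dif_neg (by omega), if_neg (by omega), if_neg (by omega)]
    rw [el]
    exact mem_bset_base β
  · -- internals not in S'
    intro i h0 hi
    simp only [pU0]
    split_ifs <;> (try simp_all) <;> omega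
  · -- consecutive adjacency
    intro i hi
    simp only [pU0]
    split_ifs <;>
      simp_all [spec_adj_inl_inl, spec_adj_inl_ext, spec_adj_ext_inl, spec_adj_ext_ext,
        spec_adj_ext_base, spec_adj_base_ext, spec_adj_inl_base, spec_adj_base_inl,
        spec_adj_base_base] <;>
      omega
  · -- no chords
    intro i j hij hj hadj
    simp only [pU0] at hadj
    split_ifs at hadj <;>
      simp_all [spec_adj_inl_inl, spec_adj_inl_ext, spec_adj_ext_inl, spec_adj_ext_ext,
        spec_adj_ext_base, spec_adj_base_ext, spec_adj_inl_base, spec_adj_base_inl,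
        spec_adj_base_base] <;>
      omega
  · -- internal degree condition
    intro i h0 hi w hw hadj
    by_cases hib : i = β + 1
    · subst hib
      have e1 : pU0 β v (β+1) = Sum.inl v := by
        simp only [pU0]
        rw [dif_neg (by omega), if_neg (by omega)]
        simp
      rw [e1] at hadj
      obtain x | ⟨x, j⟩ | k := w
      · rw [spec_adj_inl_inl] at hadj
        exfalso
        rcases hw with hw | ⟨j, hj, hw⟩
        · exact hnoadj x hw hadj
        · simp only [pU0] at hw
          split_ifs at hw
          all_goals
            first
              | (rw [Sum.inl_injective hw] at hadj
                 exact H.irrefl hadj)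
              | simp at hw
      · rw [spec_adj_inl_ext] at hadj
        obtain ⟨rfl, h⟩ := hadj
        rcases h with ⟨hmem, -⟩ | ⟨-, hj⟩
        · exact absurd hmem hv1
        · left
          have hj' : (j : ℕ) = β - 1 := by omega
          simp only [pU0, Nat.add_sub_cancel]
          rw [dif_pos ⟨by omega, by omega⟩]
          simp only [Sum.inr.injEq, Sum.inl.injEq, Prod.mk.injEq, true_and]
          rw [Fin.ext_iff]
          simp only [Fin.val_mk]
          omega
      · rw [spec_adj_inl_base] at hadj
        obtain ⟨-, rfl⟩ := hadj
        right
        simp only [pU0]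
        rw [dif_neg (by omega), if_neg (by omega), if_neg (by omega)]
    · have hmid : 1 ≤ i ∧ i ≤ β := by omega
      have em : pU0 β v i = Sum.inr (Sum.inl (v, ⟨i - 1, by omega⟩)) := by
        simp only [pU0]
        rw [dif_pos hmid]
      rw [em] at hadj
      obtain x | ⟨x, j⟩ | k := w
      · rw [spec_adj_ext_inl] at hadj
        obtain ⟨rfl, h⟩ := hadj
        rcases h with ⟨hmem, -⟩ | ⟨-, hb⟩
        · exact absurd hmem hv1
        · right
          have hib' : i = β := by simp at hb; omega
          subst hib'
          simp only [pU0]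
          rw [dif_neg (by omega), if_neg (by omega)]
          simp
      · rw [spec_adj_ext_ext] at hadj
        obtain ⟨rfl, h⟩ := hadj
        have hj' : i - 1 + 1 = (j : ℕ) ∨ (j : ℕ) + 1 = i - 1 := by simpa using h
        have hjlt : (j : ℕ) < β := j.isLt
        rcases hj' with h' | h'
        · right
          simp only [pU0]
          rw [dif_pos ⟨by omega, by omega⟩]
          simp only [Sum.inr.injEq, Sum.inl.injEq, Prod.mk.injEq, true_and]
          rw [Fin.ext_iff]
          simp only [Fin.val_mk]
          omega
        · left
          simp only [pU0]
          rw [dif_pos ⟨by omega, by omega⟩]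
          simp only [Sum.inr.injEq, Sum.inl.injEq, Prod.mk.injEq, true_and]
          rw [Fin.ext_iff]
          simp only [Fin.val_mk]
          omega
      · rw [spec_adj_ext_base] at hadj
        obtain ⟨rfl, h⟩ := hadj
        rcases h with ⟨hmem, -⟩ | ⟨-, h1'⟩
        · exact absurd hmem hv1
        · left
          have hi1 : i = 1 := by simp at h1'; omega
          subst hi1
          simp [pU0]

/-- Leftover path covering the chain of a vertex `v` already present:
`v, (v,0), …, (v,β-1), a`. -/
def pL (v : V) : ℕ → Wt V β := fun j =>
  if h : 1 ≤ j ∧ j ≤ β then Sum.inr (Sum.inl (v, ⟨j - 1, by omega⟩))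
  else if j = 0 then Sum.inl v
  else Sum.inr (Sum.inr 0)

lemma isHandle_left (hβ : 2 ≤ β) {U0 U1 : Set V} {T : Set V} {v : V}
    (hv1 : v ∈ U1) (hv0 : v ∉ U0) (hvT : v ∉ T) :
    IsHandle (spec H β U0 U1) (bset β Set.univ T) (β + 1) (pL β v) := by
  refine ⟨by omega, ?_, ?_, ?_, ?_, ?_, ?_, ?_⟩
  · intro i hi j hj hij
    simp only [pL] at hij
    split_ifs at hij <;> (try simp_all) <;> omega
  · have e0 : pL β v 0 = Sum.inl v := by simp [pL]
    rw [e0]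
    exact Set.mem_univ v
  · have el : pL β v (β+1) = Sum.inr (Sum.inr 0) := by
      simp only [pL]
      rw [dif_neg (by omega), if_neg (by omega)]
    rw [el]
    exact mem_bset_base β
  · intro i h0 hi
    simp only [pL]
    split_ifs <;> (try simp_all) <;> omega
  · intro i hi
    simp only [pL]
    split_ifs <;>
      simp_all [spec_adj_inl_inl, spec_adj_inl_ext, spec_adj_ext_inl, spec_adj_ext_ext,
        spec_adj_ext_base, spec_adj_base_ext, spec_adj_inl_base, spec_adj_base_inl,
        spec_adj_base_base] <;>
      omega
  · intro i j hij hj hadj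
    simp only [pL] at hadj
    split_ifs at hadj <;>
      simp_all [spec_adj_inl_inl, spec_adj_inl_ext, spec_adj_ext_inl, spec_adj_ext_ext,
        spec_adj_ext_base, spec_adj_base_ext, spec_adj_inl_base, spec_adj_base_inl,
        spec_adj_base_base] <;>
      omega
  · intro i h0 hi w hw hadj
    have hmid : 1 ≤ i ∧ i ≤ β := by omega
    have em : pL β v i = Sum.inr (Sum.inl (v, ⟨i - 1, by omega⟩)) := by
      simp only [pL]
      rw [dif_pos hmid]
    rw [em] at hadj
    obtain x | ⟨x, j⟩ | k := w
    · rw [spec_adj_ext_inl] at hadj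
      obtain ⟨rfl, h⟩ := hadj
      rcases h with ⟨-, h0'⟩ | ⟨hmem, -⟩
      · left
        have hi1 : i = 1 := by simp at h0'; omega
        subst hi1
        simp [pL]
      · exact absurd hmem hv0
    · rw [spec_adj_ext_ext] at hadj
      obtain ⟨rfl, h⟩ := hadj
      have hj' : i - 1 + 1 = (j : ℕ) ∨ (j : ℕ) + 1 = i - 1 := by simpa using h
      have hjlt : (j : ℕ) < β := j.isLt
      rcases hj' with h' | h'
      · right
        simp only [pL]
        rw [dif_pos ⟨by omega, by omega⟩]
        simp only [Sum.inr.injEq, Sum.inl.injEq, Prod.mk.injEq, true_and]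
        rw [Fin.ext_iff]
        simp only [Fin.val_mk]
        omega
      · left
        simp only [pL]
        rw [dif_pos ⟨by omega, by omega⟩]
        simp only [Sum.inr.injEq, Sum.inl.injEq, Prod.mk.injEq, true_and]
        rw [Fin.ext_iff]
        simp only [Fin.val_mk]
        omega
    · rw [spec_adj_ext_base] at hadj
      obtain ⟨rfl, h⟩ := hadj
      rcases h with ⟨-, hb⟩ | ⟨hmem, -⟩
      · right
        have hib : i = β := by simp at hb; omega
        subst hib
        simp only [pL]
        rw [dif_neg (by omega), if_neg (by omega)]
      · exact absurd hmem hv0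

lemma bset_union_pU1 (hβ : 2 ≤ β) {S U : Set V} {u v : V} (hu : u ∈ S) :
    bset β S U ∪ {w | ∃ j ≤ β + 2, w = pU1 β u v j} =
      bset β (insert v S) (insert v U) := by
  ext x
  obtain w | ⟨w, j'⟩ | k := x
  · simp only [Set.mem_union, mem_bset_inl, Set.mem_setOf_eq, Set.mem_insert_iff]
    constructor
    · rintro (h | ⟨j, hj, h⟩)
      · exact Or.inr h
      · simp only [pU1] at h
        split_ifs at h
        all_goals
          first
            | (rw [Sum.inl_injective h]; exact Or.inr hu)
            | exact Or.inl (Sum.inl_injective h)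
            | simp at h
    · rintro (rfl | h)
      · exact Or.inr ⟨1, by omega, by simp [pU1]⟩
      · exact Or.inl h
  · simp only [Set.mem_union, mem_bset_ext, Set.mem_setOf_eq, Set.mem_insert_iff]
    constructor
    · rintro (h | ⟨j, hj, h⟩)
      · exact Or.inr h
      · simp only [pU1] at h
        split_ifs at h
        all_goals
          first
            | (simp only [Sum.inr.injEq, Sum.inl.injEq, Prod.mk.injEq] at h
               exact Or.inl h.1)
            | simp at h
    · rintro (rfl | h)
      · have hlt := j'.isLt
        refine Or.inr ⟨(j' : ℕ) + 2, by omega, ?_⟩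
        simp only [pU1]
        rw [dif_pos ⟨by omega, by omega⟩]
        simp only [Sum.inr.injEq, Sum.inl.injEq, Prod.mk.injEq, Nat.add_sub_cancel, true_and]
        try rw [Fin.ext_iff]
        try simp
      · exact Or.inl h
  · simp


lemma bset_union_pU0 (hβ : 2 ≤ β) {S U : Set V} {v : V} :
    bset β S U ∪ {w | ∃ j ≤ β + 2, w = pU0 β v j} =
      bset β (insert v S) (insert v U) := by
  ext x
  obtain w | ⟨w, j'⟩ | k := x
  · simp only [Set.mem_union, mem_bset_inl, Set.mem_setOf_eq, Set.mem_insert_iff]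
    constructor
    · rintro (h | ⟨j, hj, h⟩)
      · exact Or.inr h
      · simp only [pU0] at h
        split_ifs at h
        all_goals
          first
            | exact Or.inl (Sum.inl_injective h)
            | simp at h
    · rintro (rfl | h)
      · refine Or.inr ⟨β + 1, by omega, ?_⟩
        simp only [pU0]
        rw [dif_neg (by omega), if_neg (by omega)]
        simp
      · exact Or.inl h
  · simp only [Set.mem_union, mem_bset_ext, Set.mem_setOf_eq, Set.mem_insert_iff]
    constructor
    · rintro (h | ⟨j, hj, h⟩)
      · exact Or.inr h
      · simp only [pU0] at h
        split_ifs at h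
        all_goals
          first
            | (simp only [Sum.inr.injEq, Sum.inl.injEq, Prod.mk.injEq] at h
               exact Or.inl h.1)
            | simp at h
    · rintro (rfl | h)
      · have hlt := j'.isLt
        refine Or.inr ⟨(j' : ℕ) + 1, by omega, ?_⟩
        simp only [pU0]
        rw [dif_pos ⟨by omega, by omega⟩]
        simp only [Sum.inr.injEq, Sum.inl.injEq, Prod.mk.injEq, Nat.add_sub_cancel, true_and]
        try rw [Fin.ext_iff]
        try simp
      · exact Or.inl h
  · simp

lemma bset_union_pL (hβ : 2 ≤ β) {T : Set V} {v : V} :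
    bset β Set.univ T ∪ {w | ∃ j ≤ β + 1, w = pL β v j} =
      bset β Set.univ (insert v T) := by
  ext x
  obtain w | ⟨w, j'⟩ | k := x
  · simp
  · simp only [Set.mem_union, mem_bset_ext, Set.mem_setOf_eq, Set.mem_insert_iff]
    constructor
    · rintro (h | ⟨j, hj, h⟩)
      · exact Or.inr h
      · simp only [pL] at h
        split_ifs at h
        all_goals
          first
            | (simp only [Sum.inr.injEq, Sum.inl.injEq, Prod.mk.injEq] at h
               exact Or.inl h.1)
            | simp at h
    · rintro (rfl | h)
      · have hlt := j'.isLt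
        refine Or.inr ⟨(j' : ℕ) + 1, by omega, ?_⟩
        simp only [pL]
        rw [dif_pos ⟨by omega, by omega⟩]
        simp only [Sum.inr.injEq, Sum.inl.injEq, Prod.mk.injEq, Nat.add_sub_cancel, true_and]
        try rw [Fin.ext_iff]
        try simp
      · exact Or.inl h
  · simp

lemma bset_union_inl {S U : Set V} {n : ℕ} {p : ℕ → V} :
    bset β S U ∪ {w | ∃ j ≤ n, w = (Sum.inl ∘ p) j} =
      bset β (S ∪ {w | ∃ j ≤ n, w = p j}) U := by
  ext x
  obtain w | ⟨w, j'⟩ | k := x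
  · simp only [Set.mem_union, mem_bset_inl, Set.mem_setOf_eq, Function.comp_apply,
      Sum.inl.injEq]
    try rfl
  · simp only [Set.mem_union, mem_bset_ext, Set.mem_setOf_eq, Function.comp_apply]
    constructor
    · rintro (h | ⟨j, hj, h⟩)
      · exact h
      · simp at h
    · exact Or.inl
  · simp


lemma spec_agree {U0 U1 U0' U1' : Set V} {S : Set V}
    (h0S : ∀ w ∈ S, (w ∈ U0 ↔ w ∈ U0'))
    (hU : ∀ w ∈ U0 ∪ U1, (w ∈ U0 ↔ w ∈ U0') ∧ (w ∈ U1 ↔ w ∈ U1')) :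
    ∀ x ∈ bset β S (U0 ∪ U1), ∀ y ∈ bset β S (U0 ∪ U1),
      ((spec H β U0 U1).Adj x y ↔ (spec H β U0' U1').Adj x y) := by
  intro x hx y hy
  obtain u | ⟨u, i⟩ | k := x <;> obtain w | ⟨w, j⟩ | k' := y <;>
    (try simp only [mem_bset_inl, mem_bset_ext] at hx hy) <;>
    simp only [spec_adj_inl_inl, spec_adj_inl_ext, spec_adj_ext_inl, spec_adj_ext_ext,
      spec_adj_ext_base, spec_adj_base_ext, spec_adj_inl_base, spec_adj_base_inl,
      spec_adj_base_base]
  all_goals try exact Iff.rfl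
  all_goals
    first
      | (have h1 := hU _ hy; tauto)
      | (have h1 := hU _ hx; tauto)
      | (have h1 := h0S _ hx; tauto)
      | (have h1 := h0S _ hy; tauto)

lemma main_ind [Fintype V] (hβ : 2 ≤ β) {S : Set V} (h : WeaklyBuildableOn H β S) :
    ∃ U0 U1 : Set V, U0 ⊆ S ∧ U1 ⊆ S ∧ Disjoint U0 U1 ∧
      BuildableOn (spec H β U0 U1) β (bset β S (U0 ∪ U1)) := by
  induction h with
  | empty =>
      refine ⟨∅, ∅, le_rfl, le_rfl, disjoint_bot_left, ?_⟩
      have hset : bset β (∅ : Set V) (∅ ∪ ∅) =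
          ({Sum.inr (Sum.inr 0), Sum.inr (Sum.inr 1)} : Set (Wt V β)) := by
        ext x
        obtain w | ⟨w, j⟩ | k := x
        · simp [bset]
        · simp [bset]
        · simp only [mem_bset_base, Set.mem_insert_iff, Set.mem_singleton_iff, true_iff]
          fin_cases k
          · exact Or.inl rfl
          · exact Or.inr rfl
      rw [hset]
      refine BuildableOn.base _ _ (by simp) ?_
      rw [spec_adj_base_base]
      exact id
  | subleaf S v hv hdeg hS ih =>
      obtain ⟨U0, U1, hU0, hU1, hdisj, hb⟩ := ih
      have hv0 : v ∉ U0 := fun h => hv (hU0 h)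
      have hv1 : v ∉ U1 := fun h => hv (hU1 h)
      by_cases hne : (S ∩ H.neighborSet v).Nonempty
      · obtain ⟨u, hu⟩ := hne
        have huS : S ∩ H.neighborSet v = {u} := by
          refine Set.eq_singleton_iff_unique_mem.mpr ⟨hu, ?_⟩
          intro x hx
          exact (Set.ncard_le_one (Set.toFinite _)).mp hdeg x hx u hu
        refine ⟨U0, insert v U1, hU0.trans (Set.subset_insert v S),
          Set.insert_subset_insert hU1, Set.disjoint_left.mpr fun a ha hb => ?_, ?_⟩
        · rcases hb with rfl | hb
          · exact hv0 ha
          · exact Set.disjoint_left.mp hdisj ha hb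
        have hb' : BuildableOn (spec H β U0 (insert v U1)) β (bset β S (U0 ∪ U1)) := by
          refine buildableOn_congr hb (spec_agree H β (fun w _ => Iff.rfl) ?_)
          intro w hw
          refine ⟨Iff.rfl, ?_, fun h => ?_⟩
          · exact fun h => Set.mem_insert_of_mem _ h
          · rcases h with rfl | h
            · rcases hw with hw | hw
              · exact absurd hw hv0
              · exact hw
            · exact h
        have hstep := BuildableOn.handle _ _ _ hb'
          (isHandle_U1 H β hβ hU0 hU1 hv huS) (by omega)
        rw [bset_union_pU1 β hβ hu.1] at hstep
        rw [Set.union_insert]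
        exact hstep
      · have hnb : S ∩ H.neighborSet v = ∅ := Set.not_nonempty_iff_eq_empty.mp hne
        refine ⟨insert v U0, U1, Set.insert_subset_insert hU0,
          hU1.trans (Set.subset_insert v S), Set.disjoint_left.mpr fun a ha hb => ?_, ?_⟩
        · rcases ha with rfl | ha
          · exact hv1 hb
          · exact Set.disjoint_left.mp hdisj ha hb
        have hb' : BuildableOn (spec H β (insert v U0) U1) β (bset β S (U0 ∪ U1)) := by
          refine buildableOn_congr hb (spec_agree H β ?_ ?_)
          · intro w hw
            constructor
            · exact fun h => Set.mem_insert_of_mem _ h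
            · rintro (rfl | h)
              · exact absurd hw hv
              · exact h
          · intro w hw
            refine ⟨⟨fun h => Set.mem_insert_of_mem _ h, fun h => ?_⟩, Iff.rfl⟩
            rcases h with rfl | h
            · rcases hw with hw | hw
              · exact absurd hw hv0
              · exact absurd hw hv1
            · exact h
        have hstep := BuildableOn.handle _ _ _ hb'
          (isHandle_U0 H β hβ hU0 hU1 hv hnb) (by omega)
        rw [bset_union_pU0 β hβ] at hstep
        rw [Set.insert_union]
        exact hstep
  | handle S n p hS hh hn ih =>
      obtain ⟨U0, U1, hU0, hU1, hdisj, hb⟩ := ih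
      refine ⟨U0, U1, hU0.trans Set.subset_union_left,
        hU1.trans Set.subset_union_left, hdisj, ?_⟩
      have hstep := BuildableOn.handle _ _ _ hb
        (step_handle H β U0 U1 S hU0 hU1 hh) hn
      rw [bset_union_inl β] at hstep
      exact hstep


lemma leftover [Fintype V] (hβ : 2 ≤ β) {U0 U1 : Set V} (hU1 : U1 = Set.univ \ U0) :
    ∀ R : Finset V, (↑R : Set V) ⊆ U1 →
      BuildableOn (spec H β U0 U1) β (bset β Set.univ (Set.univ \ ↑R)) →
      BuildableOn (spec H β U0 U1) β (bset β Set.univ Set.univ) := by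
  classical
  intro R
  induction R using Finset.induction with
  | empty =>
      intro _ hb
      have : (Set.univ \ (↑(∅ : Finset V) : Set V)) = Set.univ := by simp
      rwa [this] at hb
  | @insert a s ha ih =>
      intro hsub hb
      have hv1 : a ∈ U1 := hsub (by simp)
      have hv0 : a ∉ U0 := by
        rw [hU1] at hv1
        exact hv1.2
      have hvT : a ∉ Set.univ \ (↑(insert a s) : Set V) := by simp
      have hstep := BuildableOn.handle _ _ _ hb
        (isHandle_left H β hβ hv1 hv0 hvT) (by omega)
      rw [bset_union_pL β hβ] at hstep
      have hins : insert a (Set.univ \ (↑(insert a s) : Set V)) =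
          Set.univ \ (↑s : Set V) := by
        ext x
        simp only [Set.mem_insert_iff, Set.mem_diff, Set.mem_univ, true_and,
          Finset.coe_insert, Set.mem_insert_iff, Finset.mem_coe]
        constructor
        · rintro (rfl | hx)
          · exact fun hx => ha (by simpa using hx)
          · intro hxs
            exact hx (Or.inr hxs)
        · intro hx
          by_cases hxa : x = a
          · exact Or.inl hxa
          · exact Or.inr fun h => by
              rcases h with h | h
              · exact hxa h
              · exact hx h
      rw [hins] at hstep
      exact ih (fun x hx => hsub (by simp [hx])) hstep


end Statement5Aux


/-- for every integer `β ≥ 2`, every weakly `β`-buildable graph is an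
induced subgraph of a `β`-buildable graph. -/
theorem statement_5 {V : Type} [Fintype V] (H : SimpleGraph V) (β : ℕ) (hβ : 2 ≤ β)
    (h : WeaklyBuildable H β) :
    ∃ (W : Type) (_ : Fintype W) (H' : SimpleGraph W),
      Buildable H' β ∧ Nonempty (H ↪g H') := by
  classical
  obtain ⟨U0, U1, -, -, hdisj, hb⟩ := main_ind H β hβ h
  set U1' := Set.univ \ U0 with hU1'
  have hb2 : BuildableOn (spec H β U0 U1') β (bset β Set.univ (U0 ∪ U1)) := by
    refine buildableOn_congr hb (spec_agree H β (fun w _ => Iff.rfl) ?_)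
    intro w hw
    refine ⟨Iff.rfl, fun h1 => ⟨Set.mem_univ w, Set.disjoint_right.mp hdisj h1⟩,
      fun h1 => ?_⟩
    rcases hw with hw | hw
    · exact absurd hw h1.2
    · exact hw
  let R : Finset V := (Set.univ \ (U0 ∪ U1)).toFinset
  have hRU1 : (↑R : Set V) ⊆ U1' := by
    intro x hx
    simp only [R, Set.coe_toFinset] at hx
    exact ⟨Set.mem_univ x, fun h => hx.2 (Or.inl h)⟩
  have hRd : (Set.univ \ (↑R : Set V)) = U0 ∪ U1 := by
    simp only [R, Set.coe_toFinset]
    rw [Set.diff_diff_cancel_left (Set.subset_univ _)]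
  have hb3 : BuildableOn (spec H β U0 U1') β (bset β Set.univ (Set.univ \ ↑R)) := by
    rwa [hRd]
  have hb4 := leftover H β hβ hU1' R hRU1 hb3
  have huniv : bset β (Set.univ : Set V) (Set.univ : Set V) = Set.univ := by
    ext x
    obtain w | ⟨w, j⟩ | k := x <;> simp [bset]
  refine ⟨Wt V β, inferInstance, spec H β U0 U1', ?_, ⟨?_⟩⟩
  · rw [Buildable, ← huniv]
    exact hb4
  · exact ⟨⟨Sum.inl, Sum.inl_injective⟩, fun {a b} => spec_adj_inl_inl H β⟩

end PurePairs
end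
end

section
/- Let G be a graph, let K≥2 be an integer, and let δ>0 with δK ≤ 1/4. Let A=(A_i : i∈I) be a blockade in G of length K that is not (δ,1/8)-divergent. Then there is a (1/(4δ))-expanding blockade B=(B_i : i∈I) with B_i ⊆ A_i and |B_i| ≥ (1−δK)|A_i| for every i∈I. -/
noncomputable section

namespace PurePairs

open SimpleGraph

variable {V W : Type*}

lemma nbhd_union (G : SimpleGraph V) (X Y : Set V) :
    nbhd G (X ∪ Y) = nbhd G X ∪ nbhd G Y := by
  ext v
  simp only [nbhd, Set.mem_setOf_eq, Set.mem_union]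
  constructor
  · rintro ⟨x, (hx | hx), hadj⟩
    · exact Or.inl ⟨x, hx, hadj⟩
    · exact Or.inr ⟨x, hx, hadj⟩
  · rintro (⟨x, hx, hadj⟩ | ⟨x, hx, hadj⟩)
    · exact ⟨x, Or.inl hx, hadj⟩
    · exact ⟨x, Or.inr hx, hadj⟩

lemma nbhd_empty (G : SimpleGraph V) : nbhd G (∅ : Set V) = ∅ := by
  ext v; simp [nbhd]

lemma L1 (δ x ai bi aj bj : ℝ) (hδ : 0 < δ) (hx : 0 ≤ x) (hai : 0 < ai)
    (hbi : 3/4 * ai ≤ bi) (hbj0 : 0 ≤ bj) (hbj : bj ≤ aj) :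
    min (1/(4*δ) * x / bi) (1/4) * bj ≤ 1/(3*δ) * x / ai * aj := by
  have hbi0 : (0:ℝ) < bi := by linarith
  have haj0 : (0:ℝ) ≤ aj := le_trans hbj0 hbj
  have hkey : (1/(4*δ) * x / bi) * bj ≤ 1/(3*δ) * x / ai * aj := by
    rw [div_mul_eq_mul_div (1/(4*δ)*x) bi bj, div_mul_eq_mul_div (1/(3*δ)*x) ai aj,
      div_le_div_iff₀ hbi0 hai]
    have c0 : (0:ℝ) ≤ x/δ := by positivity
    have h1 : bj * ai ≤ aj * ai := mul_le_mul_of_nonneg_right hbj hai.le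
    have h2 : aj * ai ≤ aj * (4/3*bi) := mul_le_mul_of_nonneg_left (by linarith) haj0
    have hk : (x/δ) * (bj*ai) ≤ (x/δ) * (aj*(4/3*bi)) :=
      mul_le_mul_of_nonneg_left (h1.trans h2) c0
    have e1 : 1/(4*δ)*x*bj*ai = (x/δ)*(bj*ai)*(1/4) := by ring
    have e2 : 1/(3*δ)*x*aj*bi = (x/δ)*(aj*(4/3*bi))*(1/4) := by ring
    rw [e1, e2]
    linarith
  calc min (1/(4*δ) * x / bi) (1/4) * bj ≤ (1/(4*δ) * x / bi) * bj :=
        mul_le_mul_of_nonneg_right (min_le_left _ _) hbj0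
    _ ≤ _ := hkey

set_option maxHeartbeats 2000000 in
/-- a blockade of length `K ≥ 2` that is not `(δ, 1/8)`-divergent, with
`δK ≤ 1/4`, has a `(1/(4δ))`-expanding contraction of `A`-size at least `1 - δK`. -/
theorem statement_7 {V : Type} [Fintype V] (G : SimpleGraph V) (K : ℕ) (hK : 2 ≤ K)
    (δ : ℝ) (hδ : 0 < δ) (hδK : δ * (K : ℝ) ≤ 1/4)
    (I : Finset ℤ) (A : ℤ → Set V) (hA : IsBlockade I A) (hlen : I.card = K)
    (hdiv : ¬ Divergent G I A δ (1/8)) :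
    ∃ B : ℤ → Set V, IsBlockade I B ∧ (∀ i ∈ I, B i ⊆ A i) ∧
      (∀ i ∈ I, (1 - δ * (K : ℝ)) * ((A i).ncard : ℝ) ≤ ((B i).ncard : ℝ)) ∧
      Expanding G I B (1 / (4 * δ)) := by
  classical
  obtain ⟨hAne, hAdis⟩ := hA
  have hK2 : (2:ℝ) ≤ (K:ℝ) := by exact_mod_cast hK
  have haipos : ∀ i ∈ I, (0:ℝ) < ((A i).ncard : ℝ) := by
    intro i hi
    have : 0 < (A i).ncard := (Set.ncard_pos (Set.toFinite _)).mpr (hAne i hi)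
    exact_mod_cast this
  have hai1 : ∀ i ∈ I, (1:ℝ) ≤ ((A i).ncard : ℝ) := by
    intro i hi
    have : 0 < (A i).ncard := (Set.ncard_pos (Set.toFinite _)).mpr (hAne i hi)
    exact_mod_cast this
  have lowB : ∀ (B : ℤ → Set V) (W : ℤ → ℤ → Set V),
      (∀ i ∈ I, ((A i).ncard : ℝ) ≤ ((B i).ncard : ℝ) + ∑ j ∈ I.erase i, ((W i j).ncard : ℝ)) →
      (∀ i ∈ I, ∀ j ∈ I, i ≠ j → ((W i j).ncard : ℝ) < δ * ((A i).ncard : ℝ)) →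
      ∀ i ∈ I, (1 - δ * ((K:ℝ) - 1)) * ((A i).ncard : ℝ) ≤ ((B i).ncard : ℝ) := by
    intro B W h3 h4 i hi
    have hcard : (I.erase i).card = K - 1 := by rw [Finset.card_erase_of_mem hi, hlen]
    have hKK : ((K - 1 : ℕ) : ℝ) = (K:ℝ) - 1 := by
      have h1K : 1 ≤ K := by omega
      push_cast [Nat.cast_sub h1K]
      ring
    have hsum : ∑ j ∈ I.erase i, ((W i j).ncard : ℝ) ≤ ((K:ℝ) - 1) * (δ * ((A i).ncard:ℝ)) := by
      calc ∑ j ∈ I.erase i, ((W i j).ncard : ℝ)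
          ≤ ∑ _j ∈ I.erase i, δ * ((A i).ncard:ℝ) := by
            apply Finset.sum_le_sum
            intro j hj
            have hj' := Finset.mem_of_mem_erase hj
            have hne : j ≠ i := Finset.ne_of_mem_erase hj
            exact le_of_lt (h4 i hi j hj' (Ne.symm hne))
        _ = ((K:ℝ) - 1) * (δ * ((A i).ncard:ℝ)) := by
            rw [Finset.sum_const, hcard, nsmul_eq_mul, hKK]
    have h3i := h3 i hi
    nlinarith [haipos i hi]
  have hfrac : (3:ℝ)/4 + δ ≤ 1 - δ * ((K:ℝ) - 1) := by nlinarith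
  have key : ∀ n : ℕ, ∀ (B : ℤ → Set V) (W : ℤ → ℤ → Set V),
      (∑ i ∈ I, (B i).ncard) ≤ n →
      (∀ i ∈ I, B i ⊆ A i) →
      (∀ i ∈ I, ∀ j ∈ I, i ≠ j → W i j ⊆ A i \ B i) →
      (∀ i ∈ I, ((A i).ncard : ℝ) ≤ ((B i).ncard : ℝ) + ∑ j ∈ I.erase i, ((W i j).ncard : ℝ)) →
      (∀ i ∈ I, ∀ j ∈ I, i ≠ j → ((W i j).ncard : ℝ) < δ * ((A i).ncard : ℝ)) →
      (∀ i ∈ I, ∀ j ∈ I, i ≠ j → ((nbhd G (W i j) ∩ B j).ncard : ℝ)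
          ≤ 1/(3*δ) * ((W i j).ncard : ℝ) / ((A i).ncard : ℝ) * ((A j).ncard : ℝ)) →
      ∃ B' : ℤ → Set V, (∀ i ∈ I, B' i ⊆ A i) ∧
        (∀ i ∈ I, (1 - δ * ((K:ℝ) - 1)) * ((A i).ncard : ℝ) ≤ ((B' i).ncard : ℝ)) ∧
        Expanding G I B' (1/(4*δ)) := by
    intro n
    induction n with
    | zero =>
      intro B W hsum h1 h2 h3 h4 h5
      exfalso
      obtain ⟨i, hi⟩ : ∃ i, i ∈ I := by
        have : 0 < I.card := by omega
        obtain ⟨i, hi⟩ := Finset.card_pos.mp this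
        exact ⟨i, hi⟩
      have hz : (B i).ncard = 0 := by
        have hle : ({i} : Finset ℤ) ⊆ I := Finset.singleton_subset_iff.mpr hi
        have := Finset.sum_le_sum_of_subset (f := fun k => (B k).ncard) hle
        simp only [Finset.sum_singleton] at this
        omega
      have hlow := lowB B W h3 h4 i hi
      rw [hz] at hlow
      push_cast at hlow
      nlinarith [hai1 i hi]
    | succ n ih =>
      intro B W hsum h1 h2 h3 h4 h5
      by_cases hexp : Expanding G I B (1/(4*δ))
      · exact ⟨B, h1, lowB B W h3 h4, hexp⟩
      unfold Expanding at hexp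
      push_neg at hexp
      obtain ⟨i, hi, j, hj, hij, X, hXB, hviol⟩ := hexp
      have hBiA := h1 i hi
      have hBjA := h1 j hj
      have haipos_i := haipos i hi
      have haipos_j := haipos j hj
      have hbj_le : ((B j).ncard:ℝ) ≤ ((A j).ncard:ℝ) := by
        exact_mod_cast Set.ncard_le_ncard hBjA (Set.toFinite _)
      have hlowBi := lowB B W h3 h4 i hi
      have hlowBj := lowB B W h3 h4 j hj
      have hbi34 : 3/4 * ((A i).ncard:ℝ) ≤ ((B i).ncard:ℝ) := by nlinarith
      have hbj34 : (3/4 + δ) * ((A j).ncard:ℝ) ≤ ((B j).ncard:ℝ) := by nlinarith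
      have hbipos : (0:ℝ) < ((B i).ncard:ℝ) := by nlinarith
      have hbjpos : (0:ℝ) < ((B j).ncard:ℝ) := by nlinarith
      have hviol' : ((nbhd G X ∩ B j).ncard : ℝ)
          < min (1/(4*δ) * (X.ncard:ℝ) / ((B i).ncard:ℝ)) (1/4) * ((B j).ncard:ℝ) :=
        (div_lt_iff₀ hbjpos).mp hviol
      have hXne : X.Nonempty := by
        rw [Set.nonempty_iff_ne_empty]
        intro hempty
        rw [hempty] at hviol'
        rw [nbhd_empty] at hviol'
        simp only [Set.empty_inter, Set.ncard_empty, Nat.cast_zero, CharP.cast_eq_zero,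
          mul_zero, zero_div] at hviol'
        rw [min_eq_left (by norm_num), zero_mul] at hviol'
        exact lt_irrefl _ hviol'
      have hx0 : (0:ℝ) ≤ (X.ncard:ℝ) := by positivity
      have hx1 : (1:ℝ) ≤ (X.ncard:ℝ) := by
        have : 0 < X.ncard := (Set.ncard_pos (Set.toFinite _)).mpr hXne
        exact_mod_cast this
      have hcapX : ((nbhd G X ∩ B j).ncard : ℝ) < 1/4 * ((B j).ncard:ℝ) :=
        lt_of_lt_of_le hviol' (mul_le_mul_of_nonneg_right (min_le_right _ _) hbjpos.le)
      have hXexp : ((nbhd G X ∩ B j).ncard : ℝ)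
          ≤ 1/(3*δ) * (X.ncard:ℝ) / ((A i).ncard:ℝ) * ((A j).ncard:ℝ) :=
        le_of_lt (lt_of_lt_of_le hviol'
          (L1 δ _ _ _ _ _ hδ hx0 haipos_i hbi34 hbjpos.le hbj_le))
      have hWij := h2 i hi j hj hij
      have hdisjWX : Disjoint (W i j) X :=
        Set.disjoint_left.mpr fun a haW haX => (hWij haW).2 (hXB haX)
      have hWXcard : (((W i j) ∪ X).ncard : ℝ) = ((W i j).ncard:ℝ) + (X.ncard:ℝ) := by
        rw [Set.ncard_union_eq hdisjWX (Set.toFinite _) (Set.toFinite _)]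
        push_cast
        ring
      have hnW3 : ((nbhd G (W i j) ∩ B j).ncard:ℝ) ≤ 1/3 * ((A j).ncard:ℝ) := by
        have h5ij := h5 i hi j hj hij
        have h4ij := (h4 i hi j hj hij).le
        have hb : 1/(3*δ) * ((W i j).ncard:ℝ) / ((A i).ncard:ℝ) * ((A j).ncard:ℝ)
            ≤ 1/3 * ((A j).ncard:ℝ) := by
          rw [div_mul_eq_mul_div (1/(3*δ) * ((W i j).ncard:ℝ)) _ _, div_le_iff₀ haipos_i]
          have hwδ : ((W i j).ncard:ℝ)/δ ≤ ((A i).ncard:ℝ) := by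
            rw [div_le_iff₀ hδ]; linarith
          have := mul_le_mul_of_nonneg_right hwδ (le_of_lt haipos_j)
          have e1 : 1/(3*δ) * ((W i j).ncard:ℝ) * ((A j).ncard:ℝ)
              = (((W i j).ncard:ℝ)/δ * ((A j).ncard:ℝ)) * (1/3) := by ring
          have e2 : 1/3 * ((A j).ncard:ℝ) * ((A i).ncard:ℝ)
              = (((A i).ncard:ℝ) * ((A j).ncard:ℝ)) * (1/3) := by ring
          rw [e1, e2]
          nlinarith
        exact h5ij.trans hb
      have hnWX : ((nbhd G (W i j ∪ X) ∩ B j).ncard : ℝ)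
          ≤ ((nbhd G (W i j) ∩ B j).ncard:ℝ) + ((nbhd G X ∩ B j).ncard:ℝ) := by
        rw [nbhd_union, Set.union_inter_distrib_right]
        exact_mod_cast Set.ncard_union_le _ _
      have hsmall : (((W i j) ∪ X).ncard : ℝ) < δ * ((A i).ncard:ℝ) := by
        by_contra hge
        push_neg at hge
        apply hdiv
        refine ⟨i, hi, j, hj, hij, W i j ∪ X, ?_, B j \ nbhd G (W i j ∪ X), ?_, hge, ?_, ?_⟩
        · intro a ha
          rcases ha with haW | haX
          · exact (hWij haW).1
          · exact hBiA (hXB haX)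
        · exact Set.diff_subset.trans hBjA
        · have hYcard : ((B j).ncard:ℝ) ≤ ((B j \ nbhd G (W i j ∪ X)).ncard:ℝ)
              + ((nbhd G (W i j ∪ X) ∩ B j).ncard:ℝ) := by
            have heq := Set.ncard_inter_add_ncard_diff_eq_ncard (B j) (nbhd G (W i j ∪ X))
              (Set.toFinite _)
            rw [Set.inter_comm] at heq
            have heq' : ((B j).ncard:ℝ) = ((nbhd G (W i j ∪ X) ∩ B j).ncard:ℝ)
                + ((B j \ nbhd G (W i j ∪ X)).ncard:ℝ) := by exact_mod_cast heq.symm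
            linarith
          nlinarith
        · intro a ha b hb hadj
          exact hb.2 ⟨a, ha, hadj⟩
      -- define the new family
      set B' : ℤ → Set V := fun k => if k = i then B i \ X else B k with hB'def
      set W' : ℤ → ℤ → Set V := fun k l => if k = i ∧ l = j then W i j ∪ X else W k l
        with hW'def
      have hB'i : B' i = B i \ X := by simp [hB'def]
      have hB'k : ∀ k, k ≠ i → B' k = B k := by intro k hk; simp [hB'def, hk]
      have hW'ij : W' i j = W i j ∪ X := by simp [hW'def]
      have hW'kl : ∀ k l, ¬(k = i ∧ l = j) → W' k l = W k l := by
        intro k l h; simp only [hW'def]; rw [if_neg h]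
      have hB'sub : ∀ k, B' k ⊆ B k := by
        intro k
        by_cases hk : k = i
        · subst hk; rw [hB'i]; exact Set.diff_subset
        · rw [hB'k k hk]
      have hXpos : 0 < X.ncard := (Set.ncard_pos (Set.toFinite _)).mpr hXne
      have hsum' : ∑ k ∈ I, (B' k).ncard ≤ n := by
        have hBiX : (B i \ X).ncard + X.ncard = (B i).ncard :=
          Set.ncard_diff_add_ncard_of_subset hXB (Set.toFinite _)
        have e : ∑ k ∈ I, (B' k).ncard = ∑ k ∈ I.erase i, (B k).ncard + (B i \ X).ncard := by
          rw [← Finset.sum_erase_add I _ hi, hB'i]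
          congr 1
          apply Finset.sum_congr rfl
          intro k hk
          rw [hB'k k (Finset.ne_of_mem_erase hk)]
        have e2 : ∑ k ∈ I, (B k).ncard = ∑ k ∈ I.erase i, (B k).ncard + (B i).ncard :=
          (Finset.sum_erase_add I _ hi).symm
        omega
      have h1' : ∀ k ∈ I, B' k ⊆ A k := fun k hk => (hB'sub k).trans (h1 k hk)
      have h2' : ∀ k ∈ I, ∀ l ∈ I, k ≠ l → W' k l ⊆ A k \ B' k := by
        intro k hk l hl hkl
        by_cases hcase : k = i ∧ l = j
        · obtain ⟨rfl, rfl⟩ := hcase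
          rw [hW'ij, hB'i]
          intro a ha
          rcases ha with haW | haX
          · exact ⟨(hWij haW).1, fun hmem => (hWij haW).2 hmem.1⟩
          · exact ⟨hBiA (hXB haX), fun hmem => hmem.2 haX⟩
        · rw [hW'kl k l hcase]
          exact (h2 k hk l hl hkl).trans (Set.diff_subset_diff_right (hB'sub k))
      have h3' : ∀ k ∈ I, ((A k).ncard : ℝ)
          ≤ ((B' k).ncard : ℝ) + ∑ l ∈ I.erase k, ((W' k l).ncard : ℝ) := by
        intro k hk
        by_cases hki : k = i
        · subst hki
          have hBieq : ((B' k).ncard : ℝ) = ((B k).ncard:ℝ) - (X.ncard:ℝ) := by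
            rw [hB'i]
            exact Set.cast_ncard_sdiff hXB (Set.toFinite _)
          have hjmem : j ∈ I.erase k := Finset.mem_erase.mpr ⟨fun h => hij h.symm, hj⟩
          have hsum_eq : ∑ l ∈ I.erase k, ((W' k l).ncard:ℝ)
              = ∑ l ∈ I.erase k, ((W k l).ncard:ℝ) + (X.ncard:ℝ) := by
            rw [← Finset.sum_erase_add _ _ hjmem,
              ← Finset.sum_erase_add _ (fun l => ((W k l).ncard:ℝ)) hjmem]
            have hc : ∑ l ∈ (I.erase k).erase j, ((W' k l).ncard:ℝ)
                = ∑ l ∈ (I.erase k).erase j, ((W k l).ncard:ℝ) := by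
              apply Finset.sum_congr rfl
              intro l hl
              rw [hW'kl k l (fun h => (Finset.ne_of_mem_erase hl) h.2)]
            rw [hc, hW'ij, hWXcard]
            ring
          have h3k := h3 k hk
          rw [hBieq, hsum_eq]
          linarith
        · have hBkeq : B' k = B k := hB'k k hki
          have hsum_eq : ∑ l ∈ I.erase k, ((W' k l).ncard:ℝ)
              = ∑ l ∈ I.erase k, ((W k l).ncard:ℝ) := by
            apply Finset.sum_congr rfl
            intro l hl
            rw [hW'kl k l (fun h => hki h.1)]
          rw [hBkeq, hsum_eq]
          exact h3 k hk
      have h4' : ∀ k ∈ I, ∀ l ∈ I, k ≠ l → ((W' k l).ncard : ℝ) < δ * ((A k).ncard : ℝ) := by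
        intro k hk l hl hkl
        by_cases hcase : k = i ∧ l = j
        · obtain ⟨rfl, rfl⟩ := hcase
          rw [hW'ij]
          exact hsmall
        · rw [hW'kl k l hcase]
          exact h4 k hk l hl hkl
      have h5' : ∀ k ∈ I, ∀ l ∈ I, k ≠ l → ((nbhd G (W' k l) ∩ B' l).ncard : ℝ)
          ≤ 1/(3*δ) * ((W' k l).ncard : ℝ) / ((A k).ncard : ℝ) * ((A l).ncard : ℝ) := by
        intro k hk l hl hkl
        by_cases hcase : k = i ∧ l = j
        · obtain ⟨rfl, rfl⟩ := hcase
          have hBj' : B' l = B l := hB'k l (fun h => hkl h.symm)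
          rw [hW'ij, hBj', hWXcard]
          have h5ij := h5 k hk l hl hkl
          have hchain : ((nbhd G (W k l ∪ X) ∩ B l).ncard : ℝ)
              ≤ 1/(3*δ) * ((W k l).ncard:ℝ) / ((A k).ncard:ℝ) * ((A l).ncard:ℝ)
                + 1/(3*δ) * (X.ncard:ℝ) / ((A k).ncard:ℝ) * ((A l).ncard:ℝ) := by
            calc ((nbhd G (W k l ∪ X) ∩ B l).ncard : ℝ)
                ≤ ((nbhd G (W k l) ∩ B l).ncard:ℝ) + ((nbhd G X ∩ B l).ncard:ℝ) := hnWX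
              _ ≤ _ := by exact add_le_add h5ij hXexp
          have hring : 1/(3*δ) * ((W k l).ncard:ℝ) / ((A k).ncard:ℝ) * ((A l).ncard:ℝ)
                + 1/(3*δ) * (X.ncard:ℝ) / ((A k).ncard:ℝ) * ((A l).ncard:ℝ)
              = 1/(3*δ) * (((W k l).ncard:ℝ) + (X.ncard:ℝ)) / ((A k).ncard:ℝ)
                * ((A l).ncard:ℝ) := by ring
          rw [hring] at hchain
          exact hchain
        · rw [hW'kl k l hcase]
          refine le_trans ?_ (h5 k hk l hl hkl)
          exact_mod_cast Set.ncard_le_ncard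
            (Set.inter_subset_inter_right _ (hB'sub l)) (Set.toFinite _)
      exact ih B' W' hsum' h1' h2' h3' h4' h5'
  obtain ⟨B, hBA, hBsize, hBexp⟩ := key (∑ i ∈ I, (A i).ncard) A (fun _ _ => ∅) le_rfl
    (fun _ _ => subset_rfl)
    (fun i _ j _ _ => Set.empty_subset _)
    (fun i _ => by simp)
    (fun i hi j _ _ => by
      simpa using mul_pos hδ (haipos i hi))
    (fun i _ j _ _ => by simp [nbhd_empty])
  refine ⟨B, ⟨?_, ?_⟩, hBA, ?_, hBexp⟩
  · intro i hi
    have hs := hBsize i hi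
    have : (0:ℝ) < ((B i).ncard:ℝ) := by nlinarith [hai1 i hi]
    have : 0 < (B i).ncard := by exact_mod_cast this
    exact Set.nonempty_of_ncard_ne_zero (by omega)
  · intro i hi j hj hij
    exact (hAdis i hi j hj hij).mono (hBA i hi) (hBA j hj)
  · intro i hi
    have hs := hBsize i hi
    nlinarith [haipos i hi]


end PurePairs
end
end

section
/- Let τ≥6, and let B=(B_i : i∈I) be a blockade in a graph G. Let h_0∈I, and suppose (B_i : i∈I∖{h_0}) is τ-expanding. Let ρ be an integer such that (τ/2)^{ρ-1} ≥ |G|, let H⊆I with h_0∈H and |H|=ρ, and let v∈B_{h_0} have a neighbour in ∪_{h∈H∖{h_0}}B_h. Then there exist J ⊆ I∖H with |J| ≥ |I|/ρ − 1, and a levelling (L_0,…,L_{k-1},L_k) for some k ≤ ρ, with apex v, such that (L_0,…,L_{k-1}) is (B_i : i∈H)-rainbow and |L_k ∩ B_j| ≥ |B_j|/(4ρ) for all j∈J. -/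
noncomputable section

namespace PurePairs

open SimpleGraph

variable {V W : Type*}

/-! ### Auxiliary material for the proof of `statement_9` -/

section Aux9

lemma aux9_mem_nbhd {G : SimpleGraph V} {X : Set V} {x : V} :
    x ∈ nbhd G X ↔ ∃ a ∈ X, G.Adj a x := Iff.rfl

lemma aux9_subset_disjointified (G : SimpleGraph V) (L : ℕ → Set V) (T : Set V)
    (n : ℕ) :
    (⋃ s ∈ Finset.range n, nbhd G (L s)) ∩ T ⊆
      ⋃ s ∈ Finset.range n,
        ((nbhd G (L s) ∩ T) \ ⋃ u ∈ Finset.range s, nbhd G (L u)) := by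
  classical
  rintro x ⟨hx, hxT⟩
  simp only [Set.mem_iUnion, exists_prop, Finset.mem_range] at hx ⊢
  obtain ⟨s, hsn, hxs⟩ := hx
  have hex : ∃ s, x ∈ nbhd G (L s) := ⟨s, hxs⟩
  refine ⟨Nat.find hex, lt_of_le_of_lt (Nat.find_le hxs) hsn,
    ⟨⟨Nat.find_spec hex, hxT⟩, ?_⟩⟩
  intro hmem
  simp only [Set.mem_iUnion, exists_prop, Finset.mem_range] at hmem
  obtain ⟨u, hu, hxu⟩ := hmem
  exact Nat.find_min hex hu hxu

lemma aux9_ncard_biUnion_le [Fintype V] (n : ℕ) (f : ℕ → Set V) :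
    (⋃ s ∈ Finset.range n, f s).ncard ≤ ∑ s ∈ Finset.range n, (f s).ncard := by
  induction n with
  | zero => simp
  | succ n ih =>
    rw [Finset.range_add_one, Finset.set_biUnion_insert, Finset.sum_insert Finset.notMem_range_self]
    exact le_trans (Set.ncard_union_le _ _) (by omega)

/-- A levelling prefix used in the proof of `statement_9`. -/
structure Pfx9 (G : SimpleGraph V) (B : ℤ → Set V) (h₀ : ℤ) (H : Finset ℤ) (v : V)
    (ρ : ℕ) (t : ℕ) (q : ℕ → ℤ) (L : ℕ → Set V) : Prop where
  ht1 : 1 ≤ t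
  htρ : t ≤ ρ - 1
  hq0 : q 0 = h₀
  hqH : ∀ i ≤ t, q i ∈ H
  hqinj : ∀ i ≤ t, ∀ j ≤ t, q i = q j → i = j
  hL0 : L 0 = {v}
  hLB : ∀ i, 1 ≤ i → i ≤ t → L i ⊆ B (q i)
  hLcov : ∀ i, 1 ≤ i → i ≤ t → L i ⊆ nbhd G (L (i - 1))
  hLanti : ∀ i, i ≤ t → ∀ s, s + 2 ≤ i → Disjoint (L i) (nbhd G (L s))

lemma Pfx9.extend {G : SimpleGraph V} {B : ℤ → Set V} {h₀ : ℤ} {H : Finset ℤ} {v : V}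
    {ρ t : ℕ} {q : ℕ → ℤ} {L : ℕ → Set V}
    (hp : Pfx9 G B h₀ H v ρ t q L) (s : ℕ) (hst : s ≤ t)
    (hs1 : s + 1 ≤ ρ - 1) (h : ℤ) (hhH : h ∈ H) (hfresh : ∀ i ≤ t, q i ≠ h)
    (N : Set V) (hNB : N ⊆ B h) (hNcov : N ⊆ nbhd G (L s))
    (hNanti : ∀ u, u + 2 ≤ s + 1 → Disjoint N (nbhd G (L u))) :
    Pfx9 G B h₀ H v ρ (s+1) (fun i => if i = s+1 then h else q i)
      (fun i => if i = s+1 then N else L i) := by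
  constructor
  · omega
  · exact hs1
  · simp only [if_neg (show ¬ (0 = s+1) by omega)]
    exact hp.hq0
  · intro i hi
    by_cases hi' : i = s+1
    · simp only [if_pos hi']; exact hhH
    · simp only [if_neg hi']; exact hp.hqH i (by omega)
  · intro i hi j hj he
    by_cases hi' : i = s+1 <;> by_cases hj' : j = s+1
    · omega
    · simp only [if_pos hi', if_neg hj'] at he
      exact absurd he.symm (hfresh j (by omega))
    · simp only [if_neg hi', if_pos hj'] at he
      exact absurd he (hfresh i (by omega))
    · simp only [if_neg hi', if_neg hj'] at he
      exact hp.hqinj i (by omega) j (by omega) he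
  · simp only [if_neg (show ¬ (0 = s+1) by omega)]
    exact hp.hL0
  · intro i h1 h2
    by_cases hi' : i = s+1
    · simp only [if_pos hi']
      exact hNB
    · simp only [if_neg hi']
      exact hp.hLB i h1 (by omega)
  · intro i h1 h2
    by_cases hi' : i = s+1
    · subst hi'
      have e : s + 1 - 1 = s := rfl
      simp only [if_pos rfl, e, if_neg (show ¬ (s = s+1) by omega)]
      exact hNcov
    · simp only [if_neg hi', if_neg (show ¬ (i - 1 = s+1) by omega)]
      exact hp.hLcov i h1 (by omega)
  · intro i hi u hu
    by_cases hi' : i = s+1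
    · simp only [if_pos hi', if_neg (show ¬ (u = s+1) by omega)]
      exact hNanti u (by omega)
    · simp only [if_neg hi', if_neg (show ¬ (u = s+1) by omega)]
      exact hp.hLanti i (by omega) u hu

set_option maxHeartbeats 1000000 in
lemma aux9_exists_saturated {V : Type} [Fintype V] (G : SimpleGraph V) (τ : ℝ)
    (hτ : 6 ≤ τ) (I : Finset ℤ) (B : ℤ → Set V) (hB : IsBlockade I B)
    (h₀ : ℤ) (hexp : Expanding G (I.erase h₀) B τ)
    (ρ : ℕ) (hρ : (Fintype.card V : ℝ) ≤ (τ / 2) ^ (ρ - 1))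
    (H : Finset ℤ) (hHI : H ⊆ I) (hh₀H : h₀ ∈ H) (hHcard : H.card = ρ)
    (v : V) (hv : v ∈ B h₀) (hvn : ∃ h ∈ H.erase h₀, ∃ w ∈ B h, G.Adj v w) :
    ∃ t q L, Pfx9 G B h₀ H v ρ t q L ∧
      1/4 ≤ τ * ((L t).ncard : ℝ) / ((B (q t)).ncard : ℝ) := by
  classical
  have hτ0 : (0:ℝ) < τ := by linarith
  have h2τ : (0:ℝ) < 2/τ := by positivity
  have hcardV : 0 < (Fintype.card V : ℝ) := by
    have : 0 < Fintype.card V := Fintype.card_pos_iff.mpr ⟨v⟩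
    exact_mod_cast this
  have hBpos : ∀ i ∈ I, (0:ℝ) < ((B i).ncard : ℝ) := by
    intro i hi
    have h1 : 0 < (B i).ncard := (Set.ncard_pos (Set.toFinite _)).mpr (hB.1 i hi)
    exact_mod_cast h1
  have hBle : ∀ i : ℤ, ((B i).ncard : ℝ) ≤ (Fintype.card V : ℝ) := by
    intro i
    have h1 : (B i).ncard ≤ (Set.univ : Set V).ncard :=
      Set.ncard_le_ncard (Set.subset_univ _) (Set.toFinite _)
    rw [Set.ncard_univ, Nat.card_eq_fintype_card] at h1
    exact_mod_cast h1
  obtain ⟨h₁, hh₁, w, hw, hvw⟩ := hvn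
  have hh₁H : h₁ ∈ H := (Finset.mem_erase.mp hh₁).2
  have hh₁ne : h₁ ≠ h₀ := (Finset.mem_erase.mp hh₁).1
  have hρ2 : 2 ≤ ρ := by
    rw [← hHcard]
    have hsub : ({h₀, h₁} : Finset ℤ) ⊆ H := by
      intro x hx
      rcases Finset.mem_insert.mp hx with rfl | hx
      · exact hh₀H
      · rw [Finset.mem_singleton.mp hx]; exact hh₁H
    calc 2 = ({h₀, h₁} : Finset ℤ).card := (Finset.card_pair (Ne.symm hh₁ne)).symm
    _ ≤ H.card := Finset.card_le_card hsub
  set S : Set ℝ := {x | ∃ t q L, Pfx9 G B h₀ H v ρ t q L ∧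
      x = (2/τ)^t * ((L t).ncard : ℝ) / ((B (q t)).ncard : ℝ)} with hSdef
  have hSfin : S.Finite := by
    have hsub : S ⊆ (fun p : ℕ × ℕ × ℤ => (2/τ)^p.1 * (p.2.1 : ℝ) / ((B p.2.2).ncard : ℝ)) ''
        ((Set.Iic ρ) ×ˢ ((Set.Iic (Fintype.card V)) ×ˢ (↑H : Set ℤ))) := by
      rintro x ⟨t, q, L, hp, rfl⟩
      refine ⟨(t, (L t).ncard, q t), ⟨?_, ?_, ?_⟩, rfl⟩
      · exact le_trans hp.htρ (Nat.sub_le _ _)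
      · have h1 : (L t).ncard ≤ (Set.univ : Set V).ncard :=
          Set.ncard_le_ncard (Set.subset_univ _) (Set.toFinite _)
        rw [Set.ncard_univ, Nat.card_eq_fintype_card] at h1
        exact h1
      · exact hp.hqH t le_rfl
    exact Set.Finite.subset (Set.Finite.image _ ((Set.finite_Iic _).prod
      ((Set.finite_Iic _).prod H.finite_toSet))) hsub
  -- initial prefix
  set q₁ : ℕ → ℤ := fun i => if i = 0 then h₀ else h₁ with hq₁
  set L₁ : ℕ → Set V := fun i => if i = 0 then {v} else if i = 1 then {w} else ∅ with hL₁
  have hp₁ : Pfx9 G B h₀ H v ρ 1 q₁ L₁ := by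
    constructor
    · exact le_rfl
    · omega
    · simp [hq₁]
    · intro i hi
      interval_cases i
      · simpa [hq₁] using hh₀H
      · simpa [hq₁] using hh₁H
    · intro i hi j hj he
      interval_cases i <;> interval_cases j <;> simp only [hq₁] at he <;> norm_num at he ⊢
      · exact absurd he.symm hh₁ne
      · exact absurd he hh₁ne
    · simp [hL₁]
    · intro i h1 h2
      have hi1 : i = 1 := by omega
      subst hi1
      simp only [hL₁, hq₁]
      norm_num
      exact hw
    · intro i h1 h2
      have hi1 : i = 1 := by omega
      subst hi1
      simp only [hL₁]
      norm_num
      exact ⟨v, rfl, hvw⟩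
    · intro i hi s hs
      exact absurd hs (by omega)
  have hval₁ : (2/τ)^1 * ((L₁ 1).ncard : ℝ) / ((B (q₁ 1)).ncard : ℝ) ∈ S :=
    ⟨1, q₁, L₁, hp₁, rfl⟩
  obtain ⟨M, hMS, hMmax0⟩ := Set.Finite.exists_maximalFor id S hSfin ⟨_, hval₁⟩
  have hMmax : ∀ x ∈ S, x ≤ M := by
    intro x hx
    rcases le_or_gt x M with h | h
    · exact h
    · have h1 := hMmax0 hx h.le
      simp only [id] at h1
      exact absurd h1 (not_le.mpr h)
  have hL₁1 : ((L₁ 1).ncard : ℝ) = 1 := by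
    simp [hL₁]
  have hq₁1 : q₁ 1 = h₁ := by simp [hq₁]
  have hMlb : 2/τ / (Fintype.card V : ℝ) ≤ M := by
    have h1 : (2/τ)^1 * ((L₁ 1).ncard : ℝ) / ((B (q₁ 1)).ncard : ℝ) ≤ M := hMmax _ hval₁
    rw [hL₁1, hq₁1, pow_one, mul_one] at h1
    have hb1 : (0:ℝ) < ((B h₁).ncard : ℝ) := hBpos _ (hHI hh₁H)
    have h2 : 2/τ / (Fintype.card V : ℝ) ≤ 2/τ / ((B h₁).ncard : ℝ) :=
      div_le_div_of_nonneg_left h2τ.le hb1 (hBle h₁)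
    linarith
  have hM0 : (0:ℝ) < M := lt_of_lt_of_le (by positivity) hMlb
  -- any maximal-value prefix of full height is saturated
  have hsat_top : ∀ t q L, Pfx9 G B h₀ H v ρ t q L →
      (2/τ)^t * ((L t).ncard : ℝ) / ((B (q t)).ncard : ℝ) = M → t = ρ - 1 →
      1/4 ≤ τ * ((L t).ncard : ℝ) / ((B (q t)).ncard : ℝ) := by
    intro t q L hp hφ htt
    have hb : (0:ℝ) < ((B (q t)).ncard : ℝ) := hBpos _ (hHI (hp.hqH t le_rfl))
    have hn0 : (0:ℝ) ≤ ((L t).ncard : ℝ) := by positivity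
    set x : ℝ := ((L t).ncard : ℝ) / ((B (q t)).ncard : ℝ) with hx
    have hx0 : 0 ≤ x := by positivity
    have h1 : 2/τ / (Fintype.card V : ℝ) ≤ (2/τ)^(ρ-1) * x := by
      rw [← htt, hx, ← mul_div_assoc, hφ]
      exact hMlb
    set P : ℝ := (τ/2)^(ρ-1) with hP
    have hP0 : (0:ℝ) < P := by positivity
    have hid : (2/τ)^(ρ-1) * P = 1 := by
      rw [hP, ← mul_pow]
      rw [show (2/τ) * (τ/2) = 1 by field_simp]
      exact one_pow _
    have h2 : 2/τ * P / (Fintype.card V : ℝ) ≤ x := by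
      have h3 := mul_le_mul_of_nonneg_left h1 hP0.le
      calc 2/τ * P / (Fintype.card V : ℝ) = P * (2/τ / (Fintype.card V : ℝ)) := by ring
      _ ≤ P * ((2/τ)^(ρ-1) * x) := h3
      _ = ((2/τ)^(ρ-1) * P) * x := by ring
      _ = x := by rw [hid, one_mul]
    have h4 : 2/τ ≤ x := by
      have h5 : 2/τ * P / (Fintype.card V : ℝ) = (2/τ) * (P / (Fintype.card V : ℝ)) := by ring
      have h6 : (1:ℝ) ≤ P / (Fintype.card V : ℝ) := (one_le_div hcardV).mpr hρ
      nlinarith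
    have h7 : τ * ((L t).ncard : ℝ) / ((B (q t)).ncard : ℝ) = τ * x := by
      rw [hx]; ring
    rw [h7]
    have : (2:ℝ) ≤ τ * x := by
      have := mul_le_mul_of_nonneg_left h4 hτ0.le
      calc (2:ℝ) = τ * (2/τ) := by field_simp
      _ ≤ τ * x := this
    linarith
  -- descent
  have key : ∀ d t q L, Pfx9 G B h₀ H v ρ t q L →
      (2/τ)^t * ((L t).ncard : ℝ) / ((B (q t)).ncard : ℝ) = M → ρ - 1 - t ≤ d →
      ∃ t' q' L', Pfx9 G B h₀ H v ρ t' q' L' ∧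
        1/4 ≤ τ * ((L' t').ncard : ℝ) / ((B (q' t')).ncard : ℝ) := by
    intro d
    induction d with
    | zero =>
      intro t q L hp hφ hd
      have htt : t = ρ - 1 := by have := hp.htρ; omega
      exact ⟨t, q, L, hp, hsat_top t q L hp hφ htt⟩
    | succ d ih =>
      intro t q L hp hφ hd
      by_cases hsat : 1/4 ≤ τ * ((L t).ncard : ℝ) / ((B (q t)).ncard : ℝ)
      · exact ⟨t, q, L, hp, hsat⟩
      by_cases htop : t = ρ - 1
      · exact ⟨t, q, L, hp, hsat_top t q L hp hφ htop⟩
      have htlt : t < ρ - 1 := lt_of_le_of_ne hp.htρ htop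
      have himg : ¬ H ⊆ (Finset.range (t+1)).image q := by
        intro hsub
        have h1 := Finset.card_le_card hsub
        have h2 := Finset.card_image_le (s := Finset.range (t+1)) (f := q)
        rw [Finset.card_range] at h2
        omega
      obtain ⟨h, hhH, hhimg⟩ := Finset.not_subset.mp himg
      have hfresh : ∀ i ≤ t, q i ≠ h := by
        intro i hi he
        exact hhimg (Finset.mem_image.mpr ⟨i, Finset.mem_range.mpr (by omega), he⟩)
      have hhI : h ∈ I.erase h₀ := by
        refine Finset.mem_erase.mpr ⟨?_, hHI hhH⟩
        intro he
        exact hfresh 0 (by omega) (by rw [hp.hq0, he])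
      have hqtI : q t ∈ I.erase h₀ := by
        refine Finset.mem_erase.mpr ⟨?_, hHI (hp.hqH t le_rfl)⟩
        intro he
        have h1 : q t = q 0 := by rw [hp.hq0, he]
        have h2 := hp.hqinj t le_rfl 0 (Nat.zero_le t) h1
        have := hp.ht1
        omega
      set bt : ℝ := ((B (q t)).ncard : ℝ) with hbtdef
      set nt : ℝ := ((L t).ncard : ℝ) with hntdef
      set bh : ℝ := ((B h).ncard : ℝ) with hbhdef
      have hbt : 0 < bt := hBpos _ (hHI (hp.hqH t le_rfl))
      have hbh : 0 < bh := hBpos _ (hHI hhH)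
      have hnt0 : 0 ≤ nt := by positivity
      have hexp1 := hexp (q t) hqtI h hhI (fun he => hfresh t le_rfl he) (L t)
        (hp.hLB t hp.ht1 le_rfl)
      have hmin : min (τ * nt / bt) (1/4 : ℝ) = τ * nt / bt :=
        min_eq_left (not_le.mp hsat).le
      rw [hmin] at hexp1
      have hXlb : τ * nt / bt * bh ≤ ((nbhd G (L t) ∩ B h).ncard : ℝ) :=
        (le_div_iff₀ hbh).mp hexp1
      set R : Set V := ⋃ u ∈ Finset.range t, nbhd G (L u) with hRdef
      by_cases hcase : ((R ∩ B h).ncard : ℝ) ≤ τ/2 * (nt / bt) * bh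
      · -- extension
        set NEW : Set V := (nbhd G (L t) ∩ B h) \ R with hNEWdef
        have hsplit : (nbhd G (L t) ∩ B h) ⊆ NEW ∪ (R ∩ B h) := by
          intro x hx
          by_cases hxR : x ∈ R
          · exact Or.inr ⟨hxR, hx.2⟩
          · exact Or.inl ⟨hx, hxR⟩
        have hcard : ((nbhd G (L t) ∩ B h).ncard : ℝ) ≤
            (NEW.ncard : ℝ) + ((R ∩ B h).ncard : ℝ) := by
          have h1 := le_trans (Set.ncard_le_ncard hsplit (Set.toFinite _))
            (Set.ncard_union_le _ _)
          exact_mod_cast h1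
        have hring : τ * nt / bt * bh = 2 * (τ/2 * (nt/bt) * bh) := by ring
        have hNEWlb : τ/2 * (nt / bt) * bh ≤ (NEW.ncard : ℝ) := by
          rw [hring] at hXlb
          linarith
        have hp' := hp.extend t le_rfl (by omega) h hhH hfresh NEW
          (fun x hx => hx.1.2) (fun x hx => hx.1.1)
          (by
            intro u hu
            rw [Set.disjoint_left]
            intro x hx hxu
            exact hx.2 (Set.mem_biUnion (Finset.mem_range.mpr (by omega)) hxu))
        set q' : ℕ → ℤ := fun i => if i = t+1 then h else q i with hq'def
        set L' : ℕ → Set V := fun i => if i = t+1 then NEW else L i with hL'def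
        have hL't : L' (t+1) = NEW := by simp [hL'def]
        have hq't : q' (t+1) = h := by simp [hq'def]
        have hφ'S : (2/τ)^(t+1) * ((L' (t+1)).ncard : ℝ) / ((B (q' (t+1))).ncard : ℝ) ∈ S :=
          ⟨t+1, q', L', hp', rfl⟩
        have hφ'ge : M ≤ (2/τ)^(t+1) * ((L' (t+1)).ncard : ℝ) / ((B (q' (t+1))).ncard : ℝ) := by
          rw [hL't, hq't, ← hbhdef, ← hφ]
          have h1 : (2/τ)^(t+1) * (τ/2 * (nt/bt) * bh) / bh ≤ (2/τ)^(t+1) * (NEW.ncard : ℝ) / bh := by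
            gcongr
          have h2 : (2/τ)^(t+1) * (τ/2 * (nt/bt) * bh) / bh = (2/τ)^t * nt / bt := by
            rw [pow_succ]
            field_simp
          linarith
        have hφ' : (2/τ)^(t+1) * ((L' (t+1)).ncard : ℝ) / ((B (q' (t+1))).ncard : ℝ) = M :=
          le_antisymm (hMmax _ hφ'S) hφ'ge
        exact ih (t+1) q' L' hp' hφ' (by omega)
      · -- truncation: contradiction with maximality
        exfalso
        push_neg at hcase
        set D : ℕ → Set V := fun s => (nbhd G (L s) ∩ B h) \ ⋃ u ∈ Finset.range s, nbhd G (L u)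
          with hDdef
        have hcov : R ∩ B h ⊆ ⋃ s ∈ Finset.range t, D s :=
          aux9_subset_disjointified G L (B h) t
        have hsum : ((R ∩ B h).ncard : ℝ) ≤ ∑ s ∈ Finset.range t, ((D s).ncard : ℝ) := by
          have h1 := le_trans (Set.ncard_le_ncard hcov (Set.toFinite _))
            (aux9_ncard_biUnion_le t D)
          push_cast
          exact_mod_cast h1
        obtain ⟨s, hs, hsmax⟩ := Finset.exists_max_image (Finset.range t)
          (fun s => (2/τ)^s * ((D s).ncard : ℝ))
          ⟨0, Finset.mem_range.mpr (by have := hp.ht1; omega)⟩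
        have hst : s < t := Finset.mem_range.mp hs
        set g : ℝ := (2/τ)^s * ((D s).ncard : ℝ) with hgdef
        have hg0 : 0 ≤ g := by positivity
        have hterm : ∀ u ∈ Finset.range t, ((D u).ncard : ℝ) ≤ (τ/2)^u * g := by
          intro u hu
          have h1 := hsmax u hu
          have h2 : ((D u).ncard : ℝ) = (τ/2)^u * ((2/τ)^u * ((D u).ncard : ℝ)) := by
            rw [← mul_assoc, ← mul_pow]
            rw [show (τ/2) * (2/τ) = 1 by field_simp]
            rw [one_pow, one_mul]
          rw [h2]
          exact mul_le_mul_of_nonneg_left h1 (by positivity)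
        have hgeo : ∑ u ∈ Finset.range t, ((τ:ℝ)/2)^u ≤ (τ/2)^t / 2 := by
          rw [geom_sum_eq (ne_of_gt (by linarith : (1:ℝ) < τ/2))]
          have h1 : (0:ℝ) < τ/2 - 1 := by linarith
          rw [div_le_div_iff₀ h1 (by norm_num)]
          have h2 : (1:ℝ) ≤ (τ/2)^t := one_le_pow₀ (by linarith : (1:ℝ) ≤ τ/2)
          have h3 : 2*(τ/2)^t ≤ (τ/2-1)*(τ/2)^t :=
            mul_le_mul_of_nonneg_right (by linarith) (by positivity)
          linarith
        have hsum2 : ∑ u ∈ Finset.range t, ((D u).ncard : ℝ) ≤ (τ/2)^t / 2 * g := by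
          calc ∑ u ∈ Finset.range t, ((D u).ncard : ℝ)
              ≤ ∑ u ∈ Finset.range t, (τ/2)^u * g := Finset.sum_le_sum hterm
          _ = (∑ u ∈ Finset.range t, ((τ:ℝ)/2)^u) * g := by rw [Finset.sum_mul]
          _ ≤ (τ/2)^t / 2 * g := mul_le_mul_of_nonneg_right hgeo hg0
        have hglb : τ/2 * (nt/bt) * bh < (τ/2)^t / 2 * g :=
          lt_of_lt_of_le (lt_of_lt_of_le hcase hsum) hsum2
        have hp' := hp.extend s hst.le (by have := hp.htρ; omega) h hhH hfresh (D s)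
          (fun x hx => hx.1.2) (fun x hx => hx.1.1)
          (by
            intro u hu
            rw [Set.disjoint_left]
            intro x hx hxu
            exact hx.2 (Set.mem_biUnion (Finset.mem_range.mpr (by omega)) hxu))
        set q' : ℕ → ℤ := fun i => if i = s+1 then h else q i with hq'def
        set L' : ℕ → Set V := fun i => if i = s+1 then D s else L i with hL'def
        have hL's : L' (s+1) = D s := by simp [hL'def]
        have hq's : q' (s+1) = h := by simp [hq'def]
        have hφ'S : (2/τ)^(s+1) * ((L' (s+1)).ncard : ℝ) / ((B (q' (s+1))).ncard : ℝ) ∈ S :=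
          ⟨s+1, q', L', hp', rfl⟩
        have hle := hMmax _ hφ'S
        rw [hL's, hq's, ← hbhdef, ← hφ] at hle
        -- hle : (2/τ)^(s+1) * (D s).ncard / bh ≤ (2/τ)^t * nt / bt
        have hpowt : (0:ℝ) < (τ/2)^t := by positivity
        have hid : ((τ:ℝ)/2)^t * (2/τ)^t = 1 := by
          rw [← mul_pow]
          rw [show (τ/2) * (2/τ) = 1 by field_simp]
          exact one_pow _
        have h3 : (2/τ) * g ≤ (2/τ)^t * (nt/bt) * bh := by
          have h4 : (2/τ)^(s+1) * ((D s).ncard : ℝ) = (2/τ) * g := by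
            rw [hgdef, pow_succ]
            ring
          have h5 := (div_le_iff₀ hbh).mp hle
          rw [h4] at h5
          calc (2/τ) * g ≤ (2/τ)^t * nt / bt * bh := h5
          _ = (2/τ)^t * (nt/bt) * bh := by ring
        -- multiply h3 by (τ/2)^t ⋅ (τ/2):  (τ/2)^t g ≤ (τ/2) (nt/bt) bh
        have h6 : (τ/2)^t * g ≤ (τ/2) * ((nt/bt) * bh) := by
          have h7 := mul_le_mul_of_nonneg_left h3 (le_of_lt (by positivity : (0:ℝ) < (τ/2)^t * (τ/2)))
          calc (τ/2)^t * g = ((τ/2)^t * (τ/2)) * ((2/τ) * g) := by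
                field_simp
          _ ≤ ((τ/2)^t * (τ/2)) * ((2/τ)^t * (nt/bt) * bh) := h7
          _ = ((τ/2)^t * (2/τ)^t) * ((τ/2) * ((nt/bt) * bh)) := by ring
          _ = (τ/2) * ((nt/bt) * bh) := by rw [hid, one_mul]
        -- but hglb : (τ/2) * (nt/bt) * bh < (τ/2)^t/2 * g
        have h8 : (0:ℝ) ≤ (τ/2)^t * g := mul_nonneg (by positivity) hg0
        have h9 : ((τ:ℝ)/2)^t / 2 * g = ((τ/2)^t * g)/2 := by ring
        rw [h9] at hglb
        linarith [hglb, h6, h8]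
  obtain ⟨t0, q0, L0, hp0, hMeq⟩ := hMS
  exact key ρ t0 q0 L0 hp0 hMeq.symm (by omega)

end Aux9

/-- building a levelling inside an expanding blockade. -/
theorem statement_9 {V : Type} [Fintype V] (G : SimpleGraph V) (τ : ℝ) (hτ : 6 ≤ τ)
    (I : Finset ℤ) (B : ℤ → Set V) (hB : IsBlockade I B)
    (h₀ : ℤ) (hh₀ : h₀ ∈ I) (hexp : Expanding G (I.erase h₀) B τ)
    (ρ : ℕ) (hρ : (Fintype.card V : ℝ) ≤ (τ / 2) ^ (ρ - 1))
    (H : Finset ℤ) (hHI : H ⊆ I) (hh₀H : h₀ ∈ H) (hHcard : H.card = ρ)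
    (v : V) (hv : v ∈ B h₀) (hvn : ∃ h ∈ H.erase h₀, ∃ w ∈ B h, G.Adj v w) :
    ∃ J ⊆ I \ H, (I.card : ℝ) / (ρ : ℝ) - 1 ≤ (J.card : ℝ) ∧
      ∃ (k : ℕ) (L : ℕ → Set V), k ≤ ρ ∧ IsLevelling G L k ∧ L 0 = {v} ∧
        RainbowLevelling H B L (k - 1) ∧
        ∀ j ∈ J, ((B j).ncard : ℝ) / (4 * (ρ : ℝ)) ≤ ((L k ∩ B j).ncard : ℝ) := by
  classical
  obtain ⟨t, q, L, hp, hsat⟩ := aux9_exists_saturated G τ hτ I B hB h₀ hexp ρ hρ H hHI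
    hh₀H hHcard v hv hvn
  have hτ0 : (0:ℝ) < τ := by linarith
  have hBpos : ∀ i ∈ I, (0:ℝ) < ((B i).ncard : ℝ) := by
    intro i hi
    exact_mod_cast (Set.ncard_pos (Set.toFinite _)).mpr (hB.1 i hi)
  have hρ1 : 1 ≤ ρ := hHcard ▸ Finset.card_pos.mpr ⟨h₀, hh₀H⟩
  have ht1 := hp.ht1
  have htρ := hp.htρ
  have ht1ρ : t + 1 ≤ ρ := by omega
  have hLB' : ∀ i ≤ t, L i ⊆ B (q i) := by
    intro i hi
    rcases Nat.eq_zero_or_pos i with rfl | h1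
    · rw [hp.hL0, hp.hq0]; exact Set.singleton_subset_iff.mpr hv
    · exact hp.hLB i h1 hi
  have hqI : ∀ i ≤ t, q i ∈ I := fun i hi => hHI (hp.hqH i hi)
  have hqtI : q t ∈ I.erase h₀ := by
    refine Finset.mem_erase.mpr ⟨?_, hqI t le_rfl⟩
    intro he
    have h1 : q t = q 0 := by rw [hp.hq0, he]
    have h2 := hp.hqinj t le_rfl 0 (Nat.zero_le t) h1
    omega
  set D : ℤ → ℕ → Set V := fun j s =>
    (nbhd G (L s) ∩ B j) \ ⋃ u ∈ Finset.range s, nbhd G (L u) with hDdef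
  have hDex : ∀ j ∈ I \ H, ∃ s, s ≤ t ∧
      ((B j).ncard : ℝ) ≤ 4 * ρ * ((D j s).ncard : ℝ) := by
    intro j hj
    obtain ⟨hjI, hjH⟩ := Finset.mem_sdiff.mp hj
    have hjI' : j ∈ I.erase h₀ := Finset.mem_erase.mpr ⟨fun he => hjH (he ▸ hh₀H), hjI⟩
    have hjne : q t ≠ j := fun he => hjH (he ▸ hp.hqH t le_rfl)
    have hexp1 := hexp (q t) hqtI j hjI' hjne (L t) (hp.hLB t ht1 le_rfl)
    have hbj : (0:ℝ) < ((B j).ncard : ℝ) := hBpos j hjI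
    have hmin : min (τ * ((L t).ncard:ℝ) / ((B (q t)).ncard:ℝ)) (1/4:ℝ) = 1/4 :=
      min_eq_right hsat
    rw [hmin] at hexp1
    have hXlb : ((B j).ncard : ℝ) / 4 ≤ ((nbhd G (L t) ∩ B j).ncard : ℝ) := by
      have h1 := (le_div_iff₀ hbj).mp hexp1
      linarith
    have hsub : nbhd G (L t) ∩ B j ⊆ ⋃ s ∈ Finset.range (t+1), D j s := by
      intro x hx
      exact aux9_subset_disjointified G L (B j) (t+1)
        ⟨Set.mem_biUnion (Finset.self_mem_range_succ t) hx.1, hx.2⟩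
    have hsum : ((nbhd G (L t) ∩ B j).ncard : ℝ) ≤
        ∑ s ∈ Finset.range (t+1), ((D j s).ncard : ℝ) := by
      have h1 := le_trans (Set.ncard_le_ncard hsub (Set.toFinite _))
        (aux9_ncard_biUnion_le (t+1) (D j))
      push_cast
      exact_mod_cast h1
    obtain ⟨s, hs, hsmax⟩ := Finset.exists_max_image (Finset.range (t+1))
      (fun s => (D j s).ncard) ⟨0, Finset.mem_range.mpr (by omega)⟩
    have hst : s ≤ t := by have := Finset.mem_range.mp hs; omega
    refine ⟨s, hst, ?_⟩
    have hbound : ∑ u ∈ Finset.range (t+1), ((D j u).ncard : ℝ) ≤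
        ((t:ℝ)+1) * ((D j s).ncard : ℝ) := by
      have h1 : ∑ u ∈ Finset.range (t+1), ((D j u).ncard : ℝ) ≤
          (Finset.range (t+1)).card • ((D j s).ncard : ℝ) :=
        Finset.sum_le_card_nsmul _ _ _ (fun u hu => by exact_mod_cast hsmax u hu)
      rw [Finset.card_range, nsmul_eq_mul] at h1
      push_cast at h1
      linarith
    have hD0 : (0:ℝ) ≤ ((D j s).ncard : ℝ) := by positivity
    have htρ' : ((t:ℝ)+1) ≤ (ρ:ℝ) := by exact_mod_cast ht1ρ
    have h2 : ((t:ℝ)+1) * ((D j s).ncard : ℝ) ≤ (ρ:ℝ) * ((D j s).ncard : ℝ) :=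
      mul_le_mul_of_nonneg_right htρ' hD0
    linarith
  set f : ℤ → ℕ := fun j => if hj : j ∈ I \ H then (hDex j hj).choose else 0 with hfdef
  have hf : ∀ j ∈ I \ H, f j ≤ t ∧
      ((B j).ncard : ℝ) ≤ 4 * ρ * ((D j (f j)).ncard : ℝ) := by
    intro j hj
    simp only [hfdef, dif_pos hj]
    exact (hDex j hj).choose_spec
  have hmapsto : ∀ j ∈ I \ H, f j ∈ Finset.range (t+1) := fun j hj =>
    Finset.mem_range.mpr (by have := (hf j hj).1; omega)
  have hcardsum := Finset.card_eq_sum_card_fiberwise hmapsto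
  obtain ⟨t₀, ht₀, hmaxfib⟩ := Finset.exists_max_image (Finset.range (t+1))
    (fun s => ((I \ H).filter (fun j => f j = s)).card) ⟨0, Finset.mem_range.mpr (by omega)⟩
  set J : Finset ℤ := (I \ H).filter (fun j => f j = t₀) with hJdef
  have hfib : (I \ H).card ≤ (t+1) * J.card := by
    rw [hcardsum]
    have h1 : ∑ s ∈ Finset.range (t+1), ((I \ H).filter (fun j => f j = s)).card ≤
        (Finset.range (t+1)).card • J.card :=
      Finset.sum_le_card_nsmul _ _ _ (fun s hs => hmaxfib s hs)
    rw [Finset.card_range, smul_eq_mul] at h1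
    exact h1
  have ht₀t : t₀ ≤ t := by have := Finset.mem_range.mp ht₀; omega
  set k := t₀ + 1 with hkdef
  set Lk : Set V := (nbhd G (L t₀) \ ⋃ u ∈ Finset.range t₀, nbhd G (L u)) ∩
    ⋃ j ∈ J, B j with hLkdef
  set L' : ℕ → Set V := fun i => if i = k then Lk else L i with hL'def
  have hL'eq : ∀ i ≤ t₀, L' i = L i := by
    intro i hi
    simp only [hL'def]
    exact if_neg (by omega)
  have hL'k : L' k = Lk := by
    simp [hL'def]
  have hdisjB : ∀ a b, a ∈ I → b ∈ I → a ≠ b → Disjoint (B a) (B b) :=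
    fun a b ha hb hne => hB.2 a ha b hb hne
  have hJI : ∀ j ∈ J, j ∈ I ∧ j ∉ H := by
    intro j hj
    exact Finset.mem_sdiff.mp (Finset.mem_filter.mp hj).1
  refine ⟨J, Finset.filter_subset _ _, ?_, k, L', by omega, ?_, ?_, ?_, ?_⟩
  · -- cardinality bound
    have hIH : (I \ H).card = I.card - ρ := by rw [Finset.card_sdiff_of_subset hHI, hHcard]
    have hIρ : ρ ≤ I.card := hHcard ▸ Finset.card_le_card hHI
    have h1 : I.card - ρ ≤ (t+1) * J.card := hIH ▸ hfib
    have h2 : (t+1) * J.card ≤ ρ * J.card := Nat.mul_le_mul_right _ ht1ρ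
    have h3 : I.card ≤ ρ * J.card + ρ := by omega
    have hρpos : (0:ℝ) < (ρ:ℝ) := by exact_mod_cast (by omega : 0 < ρ)
    have h4 : (I.card:ℝ) ≤ (ρ:ℝ) * (J.card:ℝ) + (ρ:ℝ) := by exact_mod_cast h3
    rw [sub_le_iff_le_add, div_le_iff₀ hρpos]
    linarith
  · -- IsLevelling
    refine ⟨by omega, ?_, ?_, ?_, ?_⟩
    · rw [hL'eq 0 (Nat.zero_le _), hp.hL0]
      exact Set.ncard_singleton v
    · -- disjointness
      have hLL : ∀ i ≤ t₀, ∀ j ≤ t₀, i ≠ j → Disjoint (L i) (L j) := by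
        intro i hi j hj hne
        have h1 : q i ≠ q j := fun he => hne (hp.hqinj i (by omega) j (by omega) he)
        exact Set.disjoint_of_subset (hLB' i (by omega)) (hLB' j (by omega))
          (hdisjB _ _ (hqI i (by omega)) (hqI j (by omega)) h1)
      have hLk' : ∀ i ≤ t₀, Disjoint (L i) Lk := by
        intro i hi
        rw [Set.disjoint_left]
        intro x hx hx2
        obtain ⟨-, hx3⟩ := hx2
        rw [Set.mem_iUnion₂] at hx3
        obtain ⟨j, hj, hxj⟩ := hx3
        have hxBqi : x ∈ B (q i) := hLB' i (by omega) hx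
        have h1 : q i ≠ j := fun he => (hJI j hj).2 (he ▸ hp.hqH i (by omega))
        exact Set.disjoint_left.mp
          (hdisjB _ _ (hqI i (by omega)) (hJI j hj).1 h1) hxBqi hxj
      intro i hi j hj hne
      by_cases hik : i = k <;> by_cases hjk : j = k
      · omega
      · subst hik
        rw [hL'k, hL'eq j (by omega)]
        exact (hLk' j (by omega)).symm
      · subst hjk
        rw [hL'k, hL'eq i (by omega)]
        exact hLk' i (by omega)
      · rw [hL'eq i (by omega), hL'eq j (by omega)]
        exact hLL i (by omega) j (by omega) hne
    · -- covers
      intro i h1 h2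
      by_cases hik : i = k
      · subst hik
        have e : k - 1 = t₀ := by omega
        rw [hL'k, e, hL'eq t₀ le_rfl]
        intro b hb
        obtain ⟨⟨hb1, -⟩, -⟩ := hb
        exact hb1
      · rw [hL'eq i (by omega), hL'eq (i-1) (by omega)]
        intro b hb
        exact hp.hLcov i h1 (by omega) hb
    · -- anticomplete
      intro i h2i hik hh hhi
      by_cases hik' : i = k
      · subst hik'
        rw [hL'k, hL'eq hh (by omega)]
        intro a ha b hb hadj
        obtain ⟨⟨-, hb2⟩, -⟩ := hb
        exact hb2 (Set.mem_biUnion (Finset.mem_range.mpr (by omega)) ⟨a, ha, hadj⟩)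
      · rw [hL'eq i (by omega), hL'eq hh (by omega)]
        intro a ha b hb hadj
        exact Set.disjoint_left.mp (hp.hLanti i (by omega) hh hhi) hb ⟨a, ha, hadj⟩
  · -- apex
    rw [hL'eq 0 (Nat.zero_le _)]
    exact hp.hL0
  · -- rainbow
    refine ⟨q, ?_, ?_⟩
    · intro i hi
      have hi' : i ≤ t₀ := by omega
      exact ⟨hp.hqH i (by omega), by rw [hL'eq i hi']; exact hLB' i (by omega)⟩
    · intro i hi j hj he
      exact hp.hqinj i (by omega) j (by omega) he
  · -- density of the last level
    intro j hj
    obtain ⟨hjIH, hjf⟩ := Finset.mem_filter.mp hj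
    have h1 := (hf j hjIH).2
    rw [hjf] at h1
    have hsub : D j t₀ ⊆ L' k ∩ B j := by
      intro x hx
      obtain ⟨⟨hx1, hx2⟩, hx3⟩ := hx
      refine ⟨?_, hx2⟩
      rw [hL'k]
      exact ⟨⟨hx1, hx3⟩, Set.mem_biUnion hj hx2⟩
    have h2 : ((D j t₀).ncard : ℝ) ≤ ((L' k ∩ B j).ncard : ℝ) := by
      exact_mod_cast Set.ncard_le_ncard hsub (Set.toFinite _)
    have h4ρ : (0:ℝ) < 4 * (ρ:ℝ) := by
      have : (0:ℝ) < (ρ:ℝ) := by exact_mod_cast (by omega : 0 < ρ)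
      linarith
    rw [div_le_iff₀ h4ρ]
    have h3 : 4 * (ρ:ℝ) * ((D j t₀).ncard : ℝ) ≤ 4 * (ρ:ℝ) * ((L' k ∩ B j).ncard : ℝ) :=
      mul_le_mul_of_nonneg_left h2 (by linarith)
    linarith

end PurePairs
end
end

section
/- Let (L, M, C) be an A-rainbow bi-levelling in a graph G of height ℓ, and let x belong to the base of M and y belong to the base of L. Then there is an induced path P between x and y of length ℓ (number of edges) such that each of its vertices belongs to a different block of A, each of these blocks of A includes no block of C, and no internal vertex of P has a neighbour in any block of C. -/
noncomputable section

namespace PurePairs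

open SimpleGraph

variable {V W : Type*}

/-- in an `A`-rainbow bi-levelling of height `k + m`, any vertex `x` of
the base of `M` and `y` of the base of `L` are joined by an induced path of length
`k + m` whose vertices lie in distinct blocks of `A`, these blocks including no block
of `C`, and whose internal vertices have no neighbours in any block of `C`. -/
theorem statement_11 {V : Type} [Fintype V] (G : SimpleGraph V)
    (I : Finset ℤ) (A : ℤ → Set V) (hA : IsBlockade I A)
    (L : ℕ → Set V) (k : ℕ) (M : ℕ → Set V) (m : ℕ) (J : Finset ℤ) (C : ℤ → Set V)
    (hbl : IsBiLevelling G L k M m J C)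
    (hrb : RainbowBiLevelling I A L k M m J C)
    (x y : V) (hx : x ∈ M m) (hy : y ∈ L k) :
    ∃ p : ℕ → V, p 0 = x ∧ p (k + m) = y ∧
      (∀ i ≤ k + m, ∀ j ≤ k + m, p i = p j → i = j) ∧
      (∀ i < k + m, G.Adj (p i) (p (i + 1))) ∧
      (∀ i j, i + 1 < j → j ≤ k + m → ¬ G.Adj (p i) (p j)) ∧
      (∃ q : ℕ → ℤ, (∀ i ≤ k + m, q i ∈ I ∧ p i ∈ A (q i)) ∧
        (∀ i ≤ k + m, ∀ j ≤ k + m, q i = q j → i = j) ∧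
        (∀ i ≤ k + m, ∀ j ∈ J, ¬ C j ⊆ A (q i))) ∧
      (∀ i, 0 < i → i < k + m → ∀ j ∈ J, ∀ w ∈ C j, ¬ G.Adj (p i) w) := by
  obtain ⟨hJC, hL, hM, hpar, hMreach, hLgrad⟩ := hbl
  obtain ⟨hk1, hL0card, hLdisj, hLcov, hLanti⟩ := hL
  obtain ⟨hm1, hM0card, hMdisj, hMcov, hManti⟩ := hM
  obtain ⟨hL0M0, hdisjLM, hantiLM⟩ := hpar
  obtain ⟨qc, ql, qm, hqc, hql, hqm, hqcinj, hqlinj, hqminj, hqcql, hqcqm, hqlqm⟩ := hrb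
  have hLreach := hLgrad.1
  -- building a chain of neighbours down a levelling
  have chain : ∀ (N : ℕ) (S : ℕ → Set V),
      (∀ i, 1 ≤ i → i ≤ N → Covers G (S (i-1)) (S i)) →
      ∀ j, j ≤ N → ∀ v ∈ S j, ∃ f : ℕ → V, f j = v ∧ (∀ i ≤ j, f i ∈ S i) ∧
        ∀ i < j, G.Adj (f i) (f (i+1)) := by
    intro N S hcov j
    induction j with
    | zero =>
      intro _ v hv
      exact ⟨fun _ => v, rfl, fun i hi => by interval_cases i; exact hv,
        fun i hi => by omega⟩
    | succ j ih =>
      intro hj v hv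
      obtain ⟨a, ha, hadj⟩ := hcov (j+1) (by omega) hj v hv
      obtain ⟨f, hfj, hfmem, hfadj⟩ := ih (by omega) a (by simpa using ha)
      refine ⟨fun i => if i = j+1 then v else f i, by simp, ?_, ?_⟩
      · intro i hi
        by_cases h : i = j + 1
        · subst h; simpa using hv
        · simp only [if_neg h]; exact hfmem i (by omega)
      · intro i hi
        by_cases h : i = j
        · subst h
          simp only [if_neg (show i ≠ i + 1 by omega), if_pos rfl, hfj]
          exact hadj
        · simp only [if_neg (show i ≠ j + 1 by omega),
            if_neg (show i + 1 ≠ j + 1 by omega)]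
          exact hfadj i (by omega)
  obtain ⟨a0, ha0⟩ := Set.ncard_eq_one.mp hM0card
  obtain ⟨fM, hfMm, hfMmem, hfMadj⟩ := chain m M hMcov m le_rfl x hx
  obtain ⟨fL, hfLk, hfLmem, hfLadj⟩ := chain k L hLcov k le_rfl y hy
  have hfM0 : fM 0 = a0 := by
    have h := hfMmem 0 (Nat.zero_le _); rw [ha0] at h; exact h
  have hfL0 : fL 0 = a0 := by
    have h := hfLmem 0 (Nat.zero_le _); rw [hL0M0, ha0] at h; exact h
  have key : ∃ p : ℕ → V, (∀ i ≤ m, p i = fM (m - i)) ∧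
      ∀ i, m ≤ i → p i = fL (i - m) := by
    refine ⟨fun i => if i ≤ m then fM (m - i) else fL (i - m),
      fun i hi => if_pos hi, fun i hi => ?_⟩
    rcases eq_or_lt_of_le hi with h | h
    · subst h
      simp only [if_pos le_rfl, Nat.sub_self, hfM0, hfL0]
    · exact if_neg (by omega)
  obtain ⟨p, hpMeq, hpLeq⟩ := key
  have hpM : ∀ i ≤ m, p i ∈ M (m - i) := fun i hi =>
    (hpMeq i hi) ▸ hfMmem (m - i) (by omega)
  have hpL : ∀ i, m ≤ i → i ≤ k + m → p i ∈ L (i - m) := fun i hi hi' =>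
    (hpLeq i hi) ▸ hfLmem (i - m) (by omega)
  have hpne : ∀ i j, i < j → j ≤ k + m → p i ≠ p j := by
    intro i j hij hj heq
    rcases le_or_gt j m with hjm | hjm
    · have h1 := hpM i (by omega)
      have h2 := hpM j hjm
      have hd := hMdisj (m - i) (by omega) (m - j) (by omega) (by omega)
      rw [heq] at h1
      exact Set.disjoint_left.mp hd h1 h2
    · rcases lt_or_ge i m with him | him
      · have h1 : p i ∈ ⋃ t ∈ Finset.Icc 1 m, M t :=
          Set.mem_biUnion (Finset.mem_Icc.mpr ⟨by omega, by omega⟩) (hpM i (by omega))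
        have h2 : p j ∈ ⋃ t ∈ Finset.Icc 1 k, L t :=
          Set.mem_biUnion (Finset.mem_Icc.mpr ⟨by omega, by omega⟩) (hpL j (by omega) hj)
        rw [heq] at h1
        exact Set.disjoint_left.mp hdisjLM h1 h2
      · have h1 := hpL i him (by omega)
        have h2 := hpL j (by omega) hj
        have hd := hLdisj (i - m) (by omega) (j - m) (by omega) (by omega)
        rw [heq] at h1
        exact Set.disjoint_left.mp hd h1 h2
  refine ⟨p, ?_, ?_, ?_, ?_, ?_, ?_, ?_⟩
  · rw [hpMeq 0 (Nat.zero_le _), Nat.sub_zero]; exact hfMm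
  · rw [hpLeq (k + m) (by omega), show k + m - m = k by omega]; exact hfLk
  · intro i hi j hj heq
    by_contra hne
    rcases Nat.lt_or_ge i j with h | h
    · exact hpne i j h hj heq
    · exact hpne j i (by omega) hi heq.symm
  · intro i hi
    rcases le_or_gt (i + 1) m with h | h
    · rw [hpMeq i (by omega), hpMeq (i+1) h, show m - (i+1) = m - i - 1 by omega]
      have hadj := hfMadj (m - i - 1) (by omega)
      rw [show m - i - 1 + 1 = m - i by omega] at hadj
      exact hadj.symm
    · rw [hpLeq i (by omega), hpLeq (i+1) (by omega),
        show i + 1 - m = i - m + 1 by omega]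
      exact hfLadj (i - m) (by omega)
  · intro i j hij hj hadj
    rcases le_or_gt j m with hjm | hjm
    · exact hManti (m - i) (by omega) (by omega) (m - j) (by omega)
        (p j) (hpM j hjm) (p i) (hpM i (by omega)) hadj.symm
    · rcases lt_or_ge i m with him | him
      · exact hantiLM (p i)
          (Set.mem_biUnion (Finset.mem_Icc.mpr ⟨by omega, by omega⟩) (hpM i (by omega)))
          (p j)
          (Set.mem_biUnion (Finset.mem_Icc.mpr ⟨by omega, by omega⟩) (hpL j (by omega) hj))
          hadj
      · exact hLanti (j - m) (by omega) (by omega) (i - m) (by omega)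
          (p i) (hpL i him (by omega)) (p j) (hpL j (by omega) hj) hadj
  · refine ⟨fun i => if i < m then qm (m - i) else ql (i - m), ?_, ?_, ?_⟩
    · intro i hi
      by_cases h : i < m
      · simp only [if_pos h]
        exact ⟨(hqm (m - i) (by omega) (by omega)).1,
          (hqm (m - i) (by omega) (by omega)).2 (hpM i (by omega))⟩
      · simp only [if_neg h]
        exact ⟨(hql (i - m) (by omega)).1,
          (hql (i - m) (by omega)).2 (hpL i (by omega) hi)⟩
    · intro i hi j hj hq
      by_cases h1 : i < m <;> by_cases h2 : j < m
      · simp only [if_pos h1, if_pos h2] at hq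
        have := hqminj (m - i) (by omega) (by omega) (m - j) (by omega) (by omega) hq
        omega
      · simp only [if_pos h1, if_neg h2] at hq
        exact absurd hq.symm (hqlqm (j - m) (by omega) (m - i) (by omega) (by omega))
      · simp only [if_neg h1, if_pos h2] at hq
        exact absurd hq (hqlqm (i - m) (by omega) (m - j) (by omega) (by omega))
      · simp only [if_neg h1, if_neg h2] at hq
        have := hqlinj (i - m) (by omega) (j - m) (by omega) hq
        omega
    · intro i hi j hj hsub
      obtain ⟨v, hv⟩ := hJC.1 j hj
      have hCA := (hqc j hj).2
      have hqcI := (hqc j hj).1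
      by_cases h : i < m
      · simp only [if_pos h] at hsub
        have hne : qc j ≠ qm (m - i) := hqcqm j hj (m - i) (by omega) (by omega)
        have hd := hA.2 (qc j) hqcI (qm (m - i)) (hqm (m - i) (by omega) (by omega)).1 hne
        exact Set.disjoint_left.mp hd (hCA hv) (hsub hv)
      · simp only [if_neg h] at hsub
        have hne : qc j ≠ ql (i - m) := hqcql j hj (i - m) (by omega)
        have hd := hA.2 (qc j) hqcI (ql (i - m)) (hql (i - m) (by omega)).1 hne
        exact Set.disjoint_left.mp hd (hCA hv) (hsub hv)
  · intro i hi0 him j hj w hw hadj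
    have hwU : w ∈ ⋃ t ∈ J, C t := Set.mem_biUnion hj hw
    rcases lt_or_ge i m with h | h
    · obtain ⟨-, -, -, -, hanti'⟩ := hMreach
      have hanti2 : Anticomplete G (M (m - i)) (⋃ t ∈ J, C t) := by
        have h' := hanti' (m + 1) (by omega) le_rfl (m - i) (by omega)
        simpa [show m - i ≠ m + 1 by omega] using h'
      exact hanti2 (p i) (hpM i (by omega)) w hwU hadj
    · obtain ⟨-, -, -, -, hanti'⟩ := hLreach
      have hanti2 : Anticomplete G (L (i - m)) (⋃ t ∈ J, C t) := by
        have h' := hanti' (k + 1) (by omega) le_rfl (i - m) (by omega)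
        simpa [show i - m ≠ k + 1 by omega] using h'
      exact hanti2 (p i) (hpL i h (by omega)) w hwU hadj

end PurePairs
end
end
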